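/- arXiv:1806.09480 — 10 statements merged into one kernel-verified Lean document; each statement's English description precedes it below -/
import Mathlib

section
/- Let k be a positive integer, x a real number with |kx| < 1, and s a complex number with Re(s) > 1. Then ζ(s) · Σ_{n=1}^∞ (n·L_k(x:n))/n^s = Σ_{n=1}^∞ (kx)^n/n^s, where ζ denotes the Riemann zeta function. (Both series on the left and right converge absolutely under the stated hypotheses.) -/
open scoped BigOperators

/-- `L_k(x : n) = (1/n) * ∑_{d ∣ n} μ(n/d) k^d x^d`. -/
noncomputable def Lk (k : ℕ) (x : ℝ) (n : ℕ) : ℝ :=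
  (1 / (n : ℝ)) *
    ∑ d ∈ n.divisors, ((ArithmeticFunction.moebius (n / d) : ℤ) : ℝ) * (k : ℝ) ^ d * x ^ d

open LSeries.notation
theorem stmt0 (k : ℕ) (hk : 0 < k) (x : ℝ) (hx : |(k : ℝ) * x| < 1)
    (s : ℂ) (hs : 1 < s.re) :
    Summable (fun n : ℕ =>
      ‖(((n + 1 : ℕ) : ℂ) * ((Lk k x (n + 1) : ℝ) : ℂ)) / ((n + 1 : ℕ) : ℂ) ^ s‖) ∧
    Summable (fun n : ℕ =>
      ‖((((k : ℝ) * x : ℝ) : ℂ) ^ (n + 1)) / ((n + 1 : ℕ) : ℂ) ^ s‖) ∧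
    riemannZeta s *
        ∑' n : ℕ, (((n + 1 : ℕ) : ℂ) * ((Lk k x (n + 1) : ℝ) : ℂ)) / ((n + 1 : ℕ) : ℂ) ^ s
      = ∑' n : ℕ, ((((k : ℝ) * x : ℝ) : ℂ) ^ (n + 1)) / ((n + 1 : ℕ) : ℂ) ^ s := by
  set c : ℂ := (((k : ℝ) * x : ℝ) : ℂ) with hc
  have hcnorm : ‖c‖ < 1 := by
    rw [hc, Complex.norm_real, Real.norm_eq_abs]; exact hx
  have hcnn : (0 : ℝ) ≤ ‖c‖ := norm_nonneg _
  set F : ℕ → ℂ := fun n => if n = 0 then 0 else c ^ n with hF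
  set G : ℕ → ℂ := fun n => (n : ℂ) * ((Lk k x n : ℝ) : ℂ) with hG
  -- key formula for G
  have hGeq : ∀ n : ℕ, G n = ∑ d ∈ n.divisors, ((ArithmeticFunction.moebius (n / d) : ℤ) : ℂ) * c ^ d := by
    intro n
    rcases Nat.eq_zero_or_pos n with rfl | hn
    · simp [hG]
    · have hn' : (n : ℝ) ≠ 0 := Nat.cast_ne_zero.mpr hn.ne'
      rw [hG]
      simp only [Lk]
      push_cast
      rw [Finset.mul_sum, Finset.mul_sum]
      refine Finset.sum_congr rfl fun d hd => ?_
      have : (n : ℂ) ≠ 0 := Nat.cast_ne_zero.mpr hn.ne'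
      field_simp
      rw [hc]
      push_cast
      ring
  -- geometric bound
  have hsumgeo : Summable (fun d : ℕ => ‖c‖ ^ d) := summable_geometric_of_lt_one hcnn hcnorm
  have hGbound : ∀ n : ℕ, n ≠ 0 → ‖G n‖ ≤ (1 - ‖c‖)⁻¹ := by
    intro n hn
    rw [hGeq]
    calc ‖∑ d ∈ n.divisors, ((ArithmeticFunction.moebius (n / d) : ℤ) : ℂ) * c ^ d‖
        ≤ ∑ d ∈ n.divisors, ‖((ArithmeticFunction.moebius (n / d) : ℤ) : ℂ) * c ^ d‖ :=
          norm_sum_le _ _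
      _ ≤ ∑ d ∈ n.divisors, ‖c‖ ^ d := by
          refine Finset.sum_le_sum fun d hd => ?_
          rw [norm_mul, norm_pow]
          have hμ : ‖((ArithmeticFunction.moebius (n / d) : ℤ) : ℂ)‖ ≤ 1 := by
            rw [Complex.norm_intCast]
            exact_mod_cast ArithmeticFunction.abs_moebius_le_one
          calc ‖((ArithmeticFunction.moebius (n / d) : ℤ) : ℂ)‖ * ‖c‖ ^ d
              ≤ 1 * ‖c‖ ^ d := by gcongr
            _ = ‖c‖ ^ d := by rw [one_mul]
      _ ≤ ∑' d : ℕ, ‖c‖ ^ d := Summable.sum_le_tsum _ (fun d _ => pow_nonneg hcnn d) hsumgeo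
      _ = (1 - ‖c‖)⁻¹ := tsum_geometric_of_lt_one hcnn hcnorm
  have hGsumm : LSeriesSummable G s :=
    LSeriesSummable_of_bounded_of_one_lt_re hGbound hs
  have hFsumm : LSeriesSummable F s := by
    refine LSeriesSummable_of_bounded_of_one_lt_re (m := 1) (fun n hn => ?_) hs
    simp only [hF, if_neg hn]
    rw [norm_pow]
    exact pow_le_one₀ (norm_nonneg _) hcnorm.le
  have h1summ : LSeriesSummable (1 : ℕ → ℂ) s := LSeriesSummable_one_iff.mpr hs
  -- Möbius inversion: ∑_{d|n} G d = F n for n > 0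
  have hinv : ∀ n > 0, ∑ d ∈ n.divisors, G d = c ^ n := by
    rw [ArithmeticFunction.sum_eq_iff_sum_smul_moebius_eq]
    intro n hn
    simp only [zsmul_eq_mul]
    rw [Nat.sum_divisorsAntidiagonal'
      (f := fun a b => ((ArithmeticFunction.moebius a : ℤ) : ℂ) * c ^ b)]
    exact (hGeq n).symm
  -- convolution identity 1 ⍟ G = F
  have hconv : (1 : ℕ → ℂ) ⍟ G = F := by
    funext n
    rcases Nat.eq_zero_or_pos n with rfl | hn
    · simp [LSeries.convolution_map_zero, hF]
    · rw [LSeries.convolution_def]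
      simp only [Pi.one_apply, one_mul, hF, if_neg hn.ne']
      rw [← hinv n hn, Nat.sum_divisorsAntidiagonal' (f := fun _ b => G b)]
  -- relate shifted tsums to LSeries
  have hterm : ∀ (f : ℕ → ℂ) (n : ℕ), LSeries.term f s (n + 1) = f (n + 1) / ((n + 1 : ℕ) : ℂ) ^ s :=
    fun f n => LSeries.term_of_ne_zero (Nat.succ_ne_zero n) f s
  have hGnorm : Summable fun n : ℕ => ‖G (n + 1) / ((n + 1 : ℕ) : ℂ) ^ s‖ := by
    have := (summable_norm_iff.mpr hGsumm).comp_injective Nat.succ_injective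
    refine this.congr fun n => ?_
    simp only [Function.comp_apply, hterm G n]
  have hFnorm : Summable fun n : ℕ => ‖F (n + 1) / ((n + 1 : ℕ) : ℂ) ^ s‖ := by
    have := (summable_norm_iff.mpr hFsumm).comp_injective Nat.succ_injective
    refine this.congr fun n => ?_
    simp only [Function.comp_apply, hterm F n]
  refine ⟨hGnorm, ?_, ?_⟩
  · refine hFnorm.congr fun n => ?_
    simp only [hF, if_neg (Nat.succ_ne_zero n)]
  · have hGt : ∑' n : ℕ, (((n + 1 : ℕ) : ℂ) * ((Lk k x (n + 1) : ℝ) : ℂ)) / ((n + 1 : ℕ) : ℂ) ^ s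
        = LSeries G s := by
      rw [LSeries, Summable.tsum_eq_zero_add hGsumm]
      simp only [LSeries.term_zero, zero_add]
      exact (tsum_congr fun n => (hterm G n).symm)
    have hFt : ∑' n : ℕ, c ^ (n + 1) / ((n + 1 : ℕ) : ℂ) ^ s = LSeries F s := by
      rw [LSeries, Summable.tsum_eq_zero_add hFsumm]
      simp only [LSeries.term_zero, zero_add]
      refine tsum_congr fun n => ?_
      rw [hterm F n, hF]
      simp [Nat.succ_ne_zero]
    rw [hGt, hFt, ← LSeries_one_eq_riemannZeta hs, ← LSeries_convolution' h1summ hGsumm, hconv]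
end

section
/- Let m be a positive integer and s a complex number with Re(s) > 1. Then Σ_{n=1}^∞ μ(mn)/n^s = (μ(m)/ζ(s)) · ∏_{p | m, p prime} 1/(1 − p^{−s}), where the product runs over the distinct prime divisors of m, μ is the Möbius function, and ζ is the Riemann zeta function. -/
open scoped BigOperators
open ArithmeticFunction Complex
open scoped ArithmeticFunction.Moebius

noncomputable def gfun (m : ℕ) (s : ℂ) (n : ℕ) : ℂ :=
  if m.Coprime n then ((moebius n : ℤ) : ℂ) / (n : ℂ) ^ s else 0

lemma gfun_zero (m : ℕ) (s : ℂ) : gfun m s 0 = 0 := by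
  simp [gfun]

lemma summable_gfun (m : ℕ) {s : ℂ} (hs : 1 < s.re) : Summable (gfun m s) := by
  have h : LSeriesSummable (fun k : ℕ => ((moebius k : ℤ) : ℂ)) s :=
    ArithmeticFunction.LSeriesSummable_moebius_iff.mpr hs
  refine h.norm.of_norm_bounded (fun n => ?_)
  rcases eq_or_ne n 0 with rfl | hn
  · simp [gfun, LSeries.term]
  · rw [LSeries.term_of_ne_zero hn]
    unfold gfun
    split
    · exact le_refl _
    · simp; positivity

lemma gfun_rec {p m : ℕ} (hp : p.Prime) (hpm : ¬ p ∣ m) {s : ℂ} (hs : 1 < s.re) :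
    ∑' n, gfun m s n = (1 - (p : ℂ) ^ (-s)) * ∑' n, gfun (m * p) s n := by
  have hsm := summable_gfun m hs
  have hsmp := summable_gfun (m * p) hs
  have hpm' : m.Coprime p := (hp.coprime_iff_not_dvd.mpr hpm).symm
  set h : ℕ → ℂ := fun n => if p ∣ n then gfun m s n else 0 with hh
  have hpt : ∀ n, gfun m s n = gfun (m * p) s n + h n := by
    intro n
    by_cases hpn : p ∣ n
    · have h2 : ¬ (m * p).Coprime n := fun hc =>
        (hp.coprime_iff_not_dvd.mp (hc.coprime_dvd_left (dvd_mul_left p m))) hpn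
      simp [hh, hpn, gfun, h2]
    · have hcp : p.Coprime n := hp.coprime_iff_not_dvd.mpr hpn
      have hiff : (m * p).Coprime n ↔ m.Coprime n := by
        rw [Nat.coprime_mul_iff_left]; exact and_iff_left hcp
      simp [hh, hpn, gfun, hiff]
  have hsub : Summable h := by
    have : h = gfun m s - gfun (m * p) s := by
      funext n; rw [Pi.sub_apply, hpt n]; ring
    rw [this]; exact hsm.sub hsmp
  have hinj : Function.Injective (fun k : ℕ => p * k) :=
    fun a b hab => Nat.eq_of_mul_eq_mul_left hp.pos hab
  have hsupp : Function.support h ⊆ Set.range (fun k : ℕ => p * k) := by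
    intro n hn
    rcases (by by_contra hc; exact hn (if_neg hc) : p ∣ n) with ⟨k, rfl⟩
    exact ⟨k, rfl⟩
  have key : ∀ k, gfun m s (p * k) = (-(p : ℂ) ^ (-s)) * gfun (m * p) s k := by
    intro k
    by_cases hpk : p ∣ k
    · have h1 : ¬ (m * p).Coprime k := fun hc =>
        (hp.coprime_iff_not_dvd.mp (hc.coprime_dvd_left (dvd_mul_left p m))) hpk
      have h2 : μ (p * k) = 0 := moebius_eq_zero_of_not_squarefree fun hsf =>
        hp.ne_one (Nat.isUnit_iff.mp (hsf p (mul_dvd_mul_left p hpk)))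
      simp [gfun, h1, h2]
    · have hpk' : p.Coprime k := hp.coprime_iff_not_dvd.mpr hpk
      have hk0 : k ≠ 0 := fun h0 => hpk (h0 ▸ dvd_zero p)
      by_cases hmk : m.Coprime k
      · have hc1 : m.Coprime (p * k) := Nat.Coprime.mul_right hpm' hmk
        have hc2 : (m * p).Coprime k := Nat.coprime_mul_iff_left.mpr ⟨hmk, hpk'⟩
        rw [gfun, gfun, if_pos hc1, if_pos hc2,
          isMultiplicative_moebius.map_mul_of_coprime hpk', moebius_apply_prime hp]
        have hcast : ((p * k : ℕ) : ℂ) ^ s = (p : ℂ) ^ s * (k : ℂ) ^ s := by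
          push_cast
          rw [show ((p : ℂ) = ((p : ℝ) : ℂ)) by norm_num,
            show ((k : ℂ) = ((k : ℝ) : ℂ)) by norm_num,
            ← mul_cpow_ofReal_nonneg (by positivity) (by positivity)]
        have hps : (p : ℂ) ^ s ≠ 0 :=
          norm_ne_zero_iff.mp (norm_natCast_cpow_pos_of_pos hp.pos s).ne'
        have hks : (k : ℂ) ^ s ≠ 0 :=
          norm_ne_zero_iff.mp (norm_natCast_cpow_pos_of_pos (Nat.pos_of_ne_zero hk0) s).ne'
        rw [hcast, cpow_neg]
        push_cast
        field_simp
      · have hc1 : ¬ m.Coprime (p * k) := fun hc =>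
          hmk (hc.coprime_dvd_right (dvd_mul_left k p))
        have hc2 : ¬ (m * p).Coprime k := fun hc =>
          hmk (hc.coprime_dvd_left (dvd_mul_right m p))
        simp [gfun, hc1, hc2]
  calc ∑' n, gfun m s n = ∑' n, (gfun (m * p) s n + h n) := tsum_congr hpt
    _ = ∑' n, gfun (m * p) s n + ∑' n, h n := Summable.tsum_add hsmp hsub
    _ = ∑' n, gfun (m * p) s n + ∑' k, h (p * k) := by rw [hinj.tsum_eq hsupp]
    _ = ∑' n, gfun (m * p) s n + ∑' k, (-(p : ℂ) ^ (-s)) * gfun (m * p) s k := by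
        refine congrArg _ (tsum_congr fun k => ?_)
        rw [show h (p * k) = gfun m s (p * k) from if_pos ⟨k, rfl⟩, key k]
    _ = (1 - (p : ℂ) ^ (-s)) * ∑' n, gfun (m * p) s n := by rw [tsum_mul_left]; ring

lemma tsum_gfun_one {s : ℂ} (hs : 1 < s.re) : ∑' n, gfun 1 s n = (riemannZeta s)⁻¹ := by
  have h2 := ArithmeticFunction.LSeries_zeta_mul_Lseries_moebius hs
  rw [ArithmeticFunction.LSeries_zeta_eq_riemannZeta hs] at h2
  have hz := riemannZeta_ne_zero_of_one_lt_re hs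
  have h3 : LSeries (fun n : ℕ => ((μ n : ℤ) : ℂ)) s = (riemannZeta s)⁻¹ := by
    field_simp
    linear_combination h2
  rw [← h3]
  refine tsum_congr fun n => ?_
  rcases eq_or_ne n 0 with rfl | hn
  · simp [gfun_zero, LSeries.term]
  · rw [LSeries.term_of_ne_zero hn, gfun, if_pos (Nat.coprime_one_left n)]

lemma tsum_gfun_prod {s : ℂ} (hs : 1 < s.re) (P : Finset ℕ) (hP : ∀ p ∈ P, p.Prime) :
    ∑' n, gfun (∏ p ∈ P, p) s n
      = (riemannZeta s)⁻¹ * ∏ p ∈ P, (1 - (p : ℂ) ^ (-s))⁻¹ := by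
  classical
  induction P using Finset.induction_on with
  | empty => simpa using tsum_gfun_one hs
  | @insert q Q hq ih =>
    have hq' : q.Prime := hP q (Finset.mem_insert_self q Q)
    have hQ : ∀ p ∈ Q, p.Prime := fun p hp => hP p (Finset.mem_insert_of_mem hp)
    have hdvd : ¬ q ∣ ∏ p ∈ Q, p := by
      intro hd
      rcases hq'.prime.exists_mem_finset_dvd hd with ⟨r, hr, hqr⟩
      exact hq ((Nat.prime_dvd_prime_iff_eq hq' (hQ r hr)).mp hqr ▸ hr)
    have hrec := gfun_rec (m := ∏ p ∈ Q, p) hq' hdvd hs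
    rw [ih hQ] at hrec
    have hne : (1 - (q : ℂ) ^ (-s)) ≠ 0 := one_sub_prime_cpow_ne_zero hq' hs
    rw [Finset.prod_insert hq, Finset.prod_insert hq, mul_comm q (∏ p ∈ Q, p)]
    have hB : ∑' n, gfun ((∏ p ∈ Q, p) * q) s n
        = (1 - (q : ℂ) ^ (-s))⁻¹ *
          ((riemannZeta s)⁻¹ * ∏ p ∈ Q, (1 - (p : ℂ) ^ (-s))⁻¹) := by
      rw [hrec, ← mul_assoc, inv_mul_cancel₀ hne, one_mul]
    rw [hB]; ring

lemma tsum_gfun (m : ℕ) (hm : m ≠ 0) {s : ℂ} (hs : 1 < s.re) :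
    ∑' n, gfun m s n
      = (riemannZeta s)⁻¹ * ∏ p ∈ m.primeFactors, (1 - (p : ℂ) ^ (-s))⁻¹ := by
  have hP : ∀ p ∈ m.primeFactors, p.Prime := fun p hp => Nat.prime_of_mem_primeFactors hp
  have hprod0 : (∏ p ∈ m.primeFactors, p) ≠ 0 :=
    (Finset.prod_pos fun p hp => (hP p hp).pos).ne'
  rw [← tsum_gfun_prod hs _ hP]
  refine tsum_congr fun n => ?_
  have hiff : m.Coprime n ↔ (∏ p ∈ m.primeFactors, p).Coprime n := by
    rcases eq_or_ne n 0 with rfl | hn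
    · simp only [Nat.coprime_zero_right]
      constructor
      · rintro rfl; simp
      · intro h
        have h1 : m.primeFactors = ∅ := by
          rw [← Nat.primeFactors_prod hP, h]
          simp
        rcases Nat.primeFactors_eq_empty.mp h1 with rfl | rfl
        · exact absurd rfl hm
        · rfl
    · rw [← Nat.disjoint_primeFactors hm hn, ← Nat.disjoint_primeFactors hprod0 hn,
        Nat.primeFactors_prod hP]
  simp only [gfun]
  exact if_congr hiff rfl rfl

theorem stmt1 (m : ℕ) (hm : 0 < m) (s : ℂ) (hs : 1 < s.re) :
    ∑' n : ℕ, ((ArithmeticFunction.moebius (m * (n + 1)) : ℤ) : ℂ) / ((n + 1 : ℕ) : ℂ) ^ s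
      = (((ArithmeticFunction.moebius m : ℤ) : ℂ) / riemannZeta s) *
          ∏ p ∈ m.primeFactors, 1 / (1 - (p : ℂ) ^ (-s)) := by
  by_cases hsf : Squarefree m
  case neg =>
    have hμ : μ m = 0 := moebius_eq_zero_of_not_squarefree hsf
    have hz : ∀ n : ℕ, μ (m * (n + 1)) = 0 := fun n =>
      moebius_eq_zero_of_not_squarefree fun h => hsf h.of_mul_left
    simp [hz, hμ]
  case pos =>
    have key : ∀ n : ℕ, ((μ (m * (n + 1)) : ℤ) : ℂ) / ((n + 1 : ℕ) : ℂ) ^ s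
        = ((μ m : ℤ) : ℂ) * gfun m s (n + 1) := by
      intro n
      by_cases hc : m.Coprime (n + 1)
      · rw [gfun, if_pos hc, isMultiplicative_moebius.map_mul_of_coprime hc]
        push_cast
        ring
      · rcases Nat.Prime.not_coprime_iff_dvd.mp hc with ⟨p, hp, hpm, hpn⟩
        have h0 : μ (m * (n + 1)) = 0 := moebius_eq_zero_of_not_squarefree fun h =>
          hp.ne_one (Nat.isUnit_iff.mp (h p (mul_dvd_mul hpm hpn)))
        rw [gfun, if_neg hc, h0]
        simp
    rw [tsum_congr key, tsum_mul_left]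
    have hshift : ∑' n : ℕ, gfun m s (n + 1) = ∑' n, gfun m s n := by
      rw [Summable.tsum_eq_zero_add (summable_gfun m hs), gfun_zero, zero_add]
    rw [hshift, tsum_gfun m hm.ne' hs, div_eq_mul_inv]
    simp only [one_div]
    ring
end

section
/- Let k be a positive integer, x a real number with |kx| < 1, and s a complex number with Re(s) > 1. Then Σ_{n=1}^∞ L_k(x:2n−1)/(2n−1)^{s−1} = (Σ_{n odd, n ≥ 1} μ(n)/n^s) · (Σ_{m odd, m ≥ 1} (kx)^m/m^s), where both factors on the right converge absolutely. -/
open scoped BigOperators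

open scoped LSeries.notation
open LSeries

theorem stmt4 (k : ℕ) (hk : 0 < k) (x : ℝ) (hx : |(k : ℝ) * x| < 1)
    (s : ℂ) (hs : 1 < s.re) :
    Summable (fun n : ℕ =>
      ‖((ArithmeticFunction.moebius (2 * n + 1) : ℤ) : ℂ) / ((2 * n + 1 : ℕ) : ℂ) ^ s‖) ∧
    Summable (fun m : ℕ =>
      ‖((((k : ℝ) * x : ℝ) : ℂ)) ^ (2 * m + 1) / ((2 * m + 1 : ℕ) : ℂ) ^ s‖) ∧
    ∑' n : ℕ, ((Lk k x (2 * n + 1) : ℝ) : ℂ) / ((2 * n + 1 : ℕ) : ℂ) ^ (s - 1)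
      = (∑' n : ℕ, ((ArithmeticFunction.moebius (2 * n + 1) : ℤ) : ℂ) / ((2 * n + 1 : ℕ) : ℂ) ^ s) *
        (∑' m : ℕ, ((((k : ℝ) * x : ℝ) : ℂ)) ^ (2 * m + 1) / ((2 * m + 1 : ℕ) : ℂ) ^ s) := by
  set y : ℝ := (k : ℝ) * x with hy
  set f : ℕ → ℂ := fun n => if Odd n then ((ArithmeticFunction.moebius n : ℤ) : ℂ) else 0 with hfdef
  set g : ℕ → ℂ := fun n => if Odd n then ((y : ℂ)) ^ n else 0 with hgdef
  have hinj : Function.Injective (fun n : ℕ => 2 * n + 1) := fun a b h => by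
    simpa using h
  have hrange : ∀ m : ℕ, m ∉ Set.range (fun n : ℕ => 2 * n + 1) → ¬ Odd m := by
    intro m hm hodd
    obtain ⟨j, hj⟩ := hodd
    exact hm ⟨j, by show 2 * j + 1 = m; omega⟩
  -- norm summability for f
  have hsum : Summable fun n : ℕ => (n : ℝ) ^ (-s.re) :=
    Real.summable_nat_rpow.mpr (by linarith)
  have hfs : Summable fun n : ℕ => ‖LSeries.term f s n‖ := by
    apply Summable.of_nonneg_of_le (fun n => norm_nonneg _) _ hsum
    intro n
    rcases Nat.eq_zero_or_pos n with rfl | hn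
    · simp only [LSeries.term_zero, norm_zero, Nat.cast_zero]
      exact Real.rpow_nonneg le_rfl _
    · rw [LSeries.term_of_ne_zero hn.ne', norm_div,
        Complex.norm_natCast_cpow_of_pos hn, Real.rpow_neg (by positivity),
        div_eq_mul_inv]
      have h1 : ‖f n‖ ≤ 1 := by
        simp only [hfdef]
        split_ifs
        · rw [Complex.norm_intCast]
          exact_mod_cast ArithmeticFunction.abs_moebius_le_one (n := n)
        · simp
      calc ‖f n‖ * ((n : ℝ) ^ s.re)⁻¹ ≤ 1 * ((n : ℝ) ^ s.re)⁻¹ := by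
            gcongr
          _ = ((n : ℝ) ^ s.re)⁻¹ := one_mul _
  -- norm summability for g
  have hyn : ∀ n : ℕ, ‖(y : ℂ) ^ n‖ = |y| ^ n := by
    intro n; rw [norm_pow, Complex.norm_real, Real.norm_eq_abs]
  have hgs : Summable fun n : ℕ => ‖LSeries.term g s n‖ := by
    apply Summable.of_nonneg_of_le (fun n => norm_nonneg _) _
      (summable_geometric_of_lt_one (abs_nonneg y) hx)
    intro n
    rcases Nat.eq_zero_or_pos n with rfl | hn
    · simp [LSeries.term]
    · rw [LSeries.term_of_ne_zero hn.ne', norm_div,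
        Complex.norm_natCast_cpow_of_pos hn]
      have h2 : (1 : ℝ) ≤ (n : ℝ) ^ s.re := by
        apply Real.one_le_rpow (Nat.one_le_cast.mpr hn) (by linarith)
      have h3 : ‖g n‖ ≤ |y| ^ n := by
        simp only [hgdef]
        split_ifs
        · rw [hyn]
        · simp only [norm_zero]
          positivity
      exact le_trans (div_le_self (norm_nonneg _) h2) h3
  -- term values on odd numbers
  have htermf : ∀ n : ℕ, LSeries.term f s (2 * n + 1)
      = ((ArithmeticFunction.moebius (2 * n + 1) : ℤ) : ℂ) / ((2 * n + 1 : ℕ) : ℂ) ^ s := by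
    intro n
    rw [LSeries.term_of_ne_zero (by omega)]
    simp only [hfdef]
    rw [if_pos ⟨n, by ring⟩]
  have htermg : ∀ n : ℕ, LSeries.term g s (2 * n + 1)
      = ((y : ℂ)) ^ (2 * n + 1) / ((2 * n + 1 : ℕ) : ℂ) ^ s := by
    intro n
    rw [LSeries.term_of_ne_zero (by omega)]
    simp only [hgdef]
    rw [if_pos ⟨n, by ring⟩]
  refine ⟨?_, ?_, ?_⟩
  · have := hfs.comp_injective hinj
    simpa only [Function.comp_def, htermf] using this
  · have := hgs.comp_injective hinj
    simpa only [Function.comp_def, htermg] using this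
  · -- main identity
    have hfS : LSeriesSummable f s := hfs.of_norm
    have hgS : LSeriesSummable g s := hgs.of_norm
    have hconv := LSeries_convolution' hfS hgS
    -- compute LHS
    have hLHS : ∑' n : ℕ, ((Lk k x (2 * n + 1) : ℝ) : ℂ) / ((2 * n + 1 : ℕ) : ℂ) ^ (s - 1)
        = LSeries (f ⍟ g) s := by
      rw [LSeries]
      rw [← hinj.tsum_eq (f := fun m => LSeries.term (f ⍟ g) s m)]
      · congr 1
        funext n
        have hn1 : (2 * n + 1 : ℕ) ≠ 0 := by omega
        have hodd : Odd (2 * n + 1) := ⟨n, by ring⟩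
        rw [LSeries.term_of_ne_zero hn1]
        simp only [LSeries.convolution_def]
        have hterm : ∑ p ∈ (2 * n + 1).divisorsAntidiagonal, f p.1 * g p.2
            = ∑ d ∈ (2 * n + 1).divisors,
                ((ArithmeticFunction.moebius ((2 * n + 1) / d) : ℤ) : ℂ) * (y : ℂ) ^ d := by
          rw [Nat.sum_divisorsAntidiagonal' (f := fun a b => f a * g b)]
          apply Finset.sum_congr rfl
          intro d hd
          have hdvd : d ∣ 2 * n + 1 := Nat.dvd_of_mem_divisors hd
          have hdodd : Odd d := hodd.of_dvd_nat hdvd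
          have hqodd : Odd ((2 * n + 1) / d) := by
            have : (2 * n + 1) / d ∣ 2 * n + 1 := Nat.div_dvd_of_dvd hdvd
            exact hodd.of_dvd_nat this
          simp only [hfdef, hgdef]
          rw [if_pos hqodd, if_pos hdodd]
        rw [hterm]
        -- now relate to Lk
        have hLk : ((Lk k x (2 * n + 1) : ℝ) : ℂ)
            = (1 / ((2 * n + 1 : ℕ) : ℂ)) * ∑ d ∈ (2 * n + 1).divisors,
                ((ArithmeticFunction.moebius ((2 * n + 1) / d) : ℤ) : ℂ) * (y : ℂ) ^ d := by
          rw [Lk]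
          push_cast
          congr 1
          apply Finset.sum_congr rfl
          intro d _
          rw [hy]
          push_cast
          ring
        rw [hLk]
        have hne : ((2 * n + 1 : ℕ) : ℂ) ≠ 0 := by
          exact_mod_cast hn1
        have hcpow : ((2 * n + 1 : ℕ) : ℂ) ^ (s - 1) * ((2 * n + 1 : ℕ) : ℂ)
            = ((2 * n + 1 : ℕ) : ℂ) ^ s := by
          rw [Complex.cpow_sub _ _ hne, Complex.cpow_one, div_mul_cancel₀ _ hne]
        rw [← hcpow]
        ring
      · intro m hm
        by_contra hnr
        have hmo := hrange m hnr
        rw [Function.mem_support] at hm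
        apply hm
        rcases Nat.eq_zero_or_pos m with rfl | hmpos
        · simp [LSeries.term]
        · rw [LSeries.term_of_ne_zero hmpos.ne']
          simp only [LSeries.convolution_def]
          have : ∑ p ∈ m.divisorsAntidiagonal, f p.1 * g p.2 = 0 := by
            apply Finset.sum_eq_zero
            intro p hp
            have hpm : p.1 * p.2 = m := (Nat.mem_divisorsAntidiagonal.mp hp).1
            by_cases h1 : Odd p.1
            · by_cases h2 : Odd p.2
              · exact absurd (hpm ▸ h1.mul h2) hmo
              · simp only [hgdef]
                rw [if_neg h2, mul_zero]
            · simp only [hfdef]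
              rw [if_neg h1, zero_mul]
          rw [this, zero_div]
    -- compute RHS factors
    have hR1 : (∑' n : ℕ, ((ArithmeticFunction.moebius (2 * n + 1) : ℤ) : ℂ)
        / ((2 * n + 1 : ℕ) : ℂ) ^ s) = LSeries f s := by
      rw [LSeries, ← hinj.tsum_eq (f := fun m => LSeries.term f s m)]
      · exact tsum_congr fun n => (htermf n).symm
      · intro m hm
        by_contra hnr
        have hmo := hrange m hnr
        rw [Function.mem_support] at hm
        apply hm
        rcases Nat.eq_zero_or_pos m with rfl | hmpos
        · simp [LSeries.term]
        · rw [LSeries.term_of_ne_zero hmpos.ne']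
          simp only [hfdef]
          rw [if_neg hmo, zero_div]
    have hR2 : (∑' m : ℕ, ((y : ℝ) : ℂ) ^ (2 * m + 1) / ((2 * m + 1 : ℕ) : ℂ) ^ s)
        = LSeries g s := by
      rw [LSeries, ← hinj.tsum_eq (f := fun m => LSeries.term g s m)]
      · exact tsum_congr fun n => (htermg n).symm
      · intro m hm
        by_contra hnr
        have hmo := hrange m hnr
        rw [Function.mem_support] at hm
        apply hm
        rcases Nat.eq_zero_or_pos m with rfl | hmpos
        · simp [LSeries.term]
        · rw [LSeries.term_of_ne_zero hmpos.ne']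
          simp only [hgdef]
          rw [if_neg hmo, zero_div]
    rw [hLHS, hconv, hR1, hR2]
end

section
/- Let k be a positive integer, x a real number with |kx| < 1, and s a complex number with Re(s) > 1. Then ζ(s) · Σ_{n=1}^∞ L_k(x:2n−1)/(2n−1)^{s−1} = (2^s · Li_s(kx) − Li_s(k²x²))/(2^s − 1), where ζ is the Riemann zeta function and Li_s(z) := Σ_{n=1}^∞ z^n/n^s. -/
open scoped BigOperators

/-- The polylogarithm `Li_s(z) = ∑_{n ≥ 1} z^n / n^s`. -/
noncomputable def Li (s z : ℂ) : ℂ := ∑' n : ℕ, z ^ (n + 1) / ((n + 1 : ℕ) : ℂ) ^ s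

open Complex LSeries ArithmeticFunction
open scoped LSeries.notation
open scoped ArithmeticFunction.Moebius

noncomputable def Modd : ℕ → ℂ := fun n => if Odd n then ((μ n : ℤ) : ℂ) else 0
noncomputable def Fodd (y : ℂ) : ℕ → ℂ := fun n => if Odd n then y ^ n else 0

lemma summ_Modd {s : ℂ} (hs : 1 < s.re) : LSeriesSummable Modd s := by
  refine LSeriesSummable_of_bounded_of_one_lt_re (m := 1) (fun n _ => ?_) hs
  unfold Modd
  split
  · simpa using by exact_mod_cast abs_moebius_le_one (n := n)
  · simp

lemma summ_pow {y : ℂ} (hy : ‖y‖ ≤ 1) {s : ℂ} (hs : 1 < s.re) :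
    LSeriesSummable (fun n => y ^ n) s := by
  refine LSeriesSummable_of_bounded_of_one_lt_re (m := 1) (fun n _ => ?_) hs
  simpa [norm_pow] using pow_le_one₀ (norm_nonneg y) hy

lemma summ_Fodd {y : ℂ} (hy : ‖y‖ ≤ 1) {s : ℂ} (hs : 1 < s.re) :
    LSeriesSummable (Fodd y) s := by
  refine LSeriesSummable_of_bounded_of_one_lt_re (m := 1) (fun n _ => ?_) hs
  unfold Fodd
  split
  · simpa [norm_pow] using pow_le_one₀ (norm_nonneg y) hy
  · simp

lemma two_mul_inj : Function.Injective (fun t : ℕ => 2 * t) := fun a b h => by simp only at h; omega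
lemma two_mul_add_one_inj : Function.Injective (fun t : ℕ => 2 * t + 1) := fun a b h => by simp only at h; omega

/-- Even/odd splitting of an L-series. -/
lemma LSeries_split {f : ℕ → ℂ} {s : ℂ} (hf : LSeriesSummable f s) :
    LSeries f s = (∑' t : ℕ, term f s (2 * t)) + ∑' t : ℕ, term f s (2 * t + 1) :=
  (tsum_even_add_odd (hf.comp_injective two_mul_inj)
    (hf.comp_injective two_mul_add_one_inj)).symm

lemma cpow_two_mul (s : ℂ) (t : ℕ) :
    ((2 * t : ℕ) : ℂ) ^ s = (2 : ℂ) ^ s * ((t : ℕ) : ℂ) ^ s := by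
  have : ((2 * t : ℕ) : ℂ) = (((2 * t : ℝ)) : ℂ) := by push_cast; ring
  rw [this, show ((2 * t : ℝ) : ℂ) = ((2:ℝ) : ℂ) * ((t:ℝ) : ℂ) by push_cast; ring,
    mul_cpow_ofReal_nonneg (by norm_num) t.cast_nonneg]
  norm_num

example : True := trivial

lemma Li_eq {y : ℂ} (hy : ‖y‖ ≤ 1) {s : ℂ} (hs : 1 < s.re) :
    LSeries (fun n => y ^ n) s = Li s y := by
  rw [LSeries, Summable.tsum_eq_zero_add (summ_pow hy hs), term_zero, zero_add, Li]
  exact tsum_congr fun n => by rw [term_of_ne_zero n.succ_ne_zero]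

lemma LSeries_Fodd {y : ℂ} (hy : ‖y‖ ≤ 1) {s : ℂ} (hs : 1 < s.re) :
    LSeries (Fodd y) s = Li s y - ((2:ℂ)^s)⁻¹ * Li s (y^2) := by
  have hy2 : ‖y ^ 2‖ ≤ 1 := by rw [norm_pow]; exact pow_le_one₀ (norm_nonneg y) hy
  have h1 : LSeries (fun n => y ^ n) s
      = ((2:ℂ)^s)⁻¹ * LSeries (fun n => (y^2) ^ n) s + LSeries (Fodd y) s := by
    rw [LSeries_split (summ_pow hy hs)]
    congr 1
    · rw [LSeries, ← tsum_mul_left]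
      refine tsum_congr fun t => ?_
      rcases eq_or_ne t 0 with rfl | ht
      · simp
      · rw [term_of_ne_zero (by positivity), term_of_ne_zero ht, cpow_two_mul, ← pow_mul]
        rw [mul_comm 2 t, pow_mul]
        field_simp
    · rw [LSeries_split (summ_Fodd hy hs)]
      have he : ∀ t : ℕ, term (Fodd y) s (2 * t) = 0 := by
        intro t
        rcases eq_or_ne t 0 with rfl | ht
        · simp
        · rw [term_of_ne_zero (by positivity)]
          have : ¬ Odd (2 * t) := Nat.not_odd_iff_even.mpr (even_two_mul t)
          simp [Fodd, this]
      rw [tsum_congr he, tsum_zero, zero_add]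
      refine tsum_congr fun t => ?_
      have ho : Odd (2 * t + 1) := odd_two_mul_add_one t
      rw [term_of_ne_zero (by positivity), term_of_ne_zero (by positivity)]
      simp [Fodd, ho]
  rw [Li_eq hy hs, Li_eq hy2 hs] at h1
  linear_combination -h1

lemma mu_two_mul (t : ℕ) : ((μ (2 * t) : ℤ) : ℂ) = - Modd t := by
  unfold Modd
  rcases eq_or_ne t 0 with rfl | ht
  · simp
  by_cases hodd : Odd t
  · have hcop : Nat.Coprime 2 t := Nat.coprime_two_left.mpr hodd
    rw [isMultiplicative_moebius.map_mul_of_coprime hcop,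
      moebius_apply_prime Nat.prime_two]
    simp [hodd]
  · have hsq : ¬ Squarefree (2 * t) := by
      intro h
      obtain ⟨u, rfl⟩ := (Nat.not_odd_iff_even.mp hodd)
      have : IsUnit 2 := h 2 ⟨u, by ring⟩
      simpa using this
    rw [moebius_eq_zero_of_not_squarefree hsq]
    simp [hodd]

lemma LSeries_Modd_eq {s : ℂ} (hs : 1 < s.re) :
    LSeries (fun n => ((μ n : ℤ) : ℂ)) s = (1 - ((2:ℂ)^s)⁻¹) * LSeries Modd s := by
  have hM := summ_Modd hs
  have hμ : LSeriesSummable (fun n => ((μ n : ℤ) : ℂ)) s := by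
    have := ArithmeticFunction.LSeriesSummable_moebius_iff.mpr hs
    exact this
  rw [LSeries_split hμ]
  have he : ∀ t : ℕ, term (fun n => ((μ n : ℤ) : ℂ)) s (2 * t)
      = -((2:ℂ)^s)⁻¹ * term Modd s t := by
    intro t
    rcases eq_or_ne t 0 with rfl | ht
    · simp
    · rw [term_of_ne_zero (by positivity), term_of_ne_zero ht, cpow_two_mul, mu_two_mul]
      field_simp
  have ho : ∀ t : ℕ, term (fun n => ((μ n : ℤ) : ℂ)) s (2 * t + 1) = term Modd s (2 * t + 1) := by
    intro t
    rw [term_of_ne_zero (by positivity), term_of_ne_zero (by positivity)]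
    simp [Modd, odd_two_mul_add_one t]
  rw [tsum_congr he, tsum_mul_left, tsum_congr ho]
  have hModd : LSeries Modd s = ∑' t : ℕ, term Modd s (2 * t + 1) := by
    rw [LSeries_split hM]
    have he' : ∀ t : ℕ, term Modd s (2 * t) = 0 := by
      intro t
      rcases eq_or_ne t 0 with rfl | ht
      · simp
      · rw [term_of_ne_zero (by positivity)]
        have : ¬ Odd (2 * t) := Nat.not_odd_iff_even.mpr (even_two_mul t)
        simp [Modd, this]
    rw [tsum_congr he', tsum_zero, zero_add]
  rw [show (∑' t : ℕ, term Modd s t) = LSeries Modd s from rfl, ← hModd]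
  ring

lemma two_cpow_ne_zero (s : ℂ) : (2:ℂ) ^ s ≠ 0 := by
  intro h
  rcases (cpow_eq_zero_iff _ _).mp h with ⟨h2, -⟩
  norm_num at h2

lemma two_cpow_ne_one {s : ℂ} (hs : 1 < s.re) : (2:ℂ) ^ s ≠ 1 := by
  intro h
  have habs : ‖(2:ℂ) ^ s‖ = (2:ℝ) ^ s.re := by
    have : ((2:ℝ) : ℂ) = (2:ℂ) := by norm_num
    rw [← this, Complex.norm_cpow_eq_rpow_re_of_pos (by norm_num)]
  rw [h] at habs
  have : (1:ℝ) < (2:ℝ) ^ s.re :=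
    (Real.one_lt_rpow_iff_of_pos (by norm_num)).mpr (Or.inl ⟨one_lt_two, by linarith⟩)
  simp at habs
  linarith [habs, this]

lemma zeta_mul_Modd {s : ℂ} (hs : 1 < s.re) :
    riemannZeta s * LSeries Modd s = (2:ℂ)^s / ((2:ℂ)^s - 1) := by
  have hz : riemannZeta s * LSeries (fun n => ((μ n : ℤ) : ℂ)) s = 1 := by
    have := ArithmeticFunction.LSeries_zeta_mul_Lseries_moebius hs
    rwa [ArithmeticFunction.LSeries_zeta_eq_riemannZeta hs] at this
  rw [LSeries_Modd_eq hs] at hz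
  have h2 := two_cpow_ne_zero s
  have h21 : (2:ℂ)^s - 1 ≠ 0 := sub_ne_zero.mpr (two_cpow_ne_one hs)
  field_simp at hz ⊢
  linear_combination hz

lemma conv_odd (y : ℂ) {m : ℕ} (hm : Odd m) :
    (Modd ⍟ Fodd y) m = ∑ d ∈ m.divisors, ((μ (m / d) : ℤ) : ℂ) * y ^ d := by
  have key : ∀ a : ℕ, a ∣ m → Odd a := fun a ha => by
    obtain ⟨c, rfl⟩ := ha; exact (Nat.odd_mul.mp hm).1
  rw [LSeries.convolution_def]
  simp only []
  rw [Nat.sum_divisorsAntidiagonal' (f := fun a b => Modd a * Fodd y b)]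
  refine Finset.sum_congr rfl fun d hd => ?_
  have hdvd : d ∣ m := (Nat.mem_divisors.mp hd).1
  simp [Modd, Fodd, key d hdvd, key (m / d) (Nat.div_dvd_of_dvd hdvd)]

lemma conv_even (y : ℂ) {m : ℕ} (hm : ¬ Odd m) : (Modd ⍟ Fodd y) m = 0 := by
  rw [LSeries.convolution_def]
  simp only []
  refine Finset.sum_eq_zero fun p hp => ?_
  have hmul := (Nat.mem_divisorsAntidiagonal.mp hp).1
  by_cases h1 : Odd p.1
  · by_cases h2 : Odd p.2
    · exact absurd (hmul ▸ Nat.odd_mul.mpr ⟨h1, h2⟩) hm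
    · simp [Fodd, h2]
  · simp [Modd, h1]

lemma term_step {k : ℕ} {x : ℝ} {y : ℂ} (hy : y = (((k:ℝ) * x : ℝ) : ℂ)) (s : ℂ)
    {m : ℕ} (hm : Odd m) :
    ((Lk k x m : ℝ) : ℂ) / ((m : ℕ) : ℂ) ^ (s - 1) = term (Modd ⍟ Fodd y) s m := by
  have hm0 : m ≠ 0 := by rintro rfl; simp at hm
  have hmc : ((m : ℕ) : ℂ) ≠ 0 := Nat.cast_ne_zero.mpr hm0
  have hms : ((m : ℕ) : ℂ) ^ s ≠ 0 := by
    intro h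
    exact hmc ((cpow_eq_zero_iff _ _).mp h).1
  rw [term_of_ne_zero hm0, conv_odd y hm, cpow_sub _ _ hmc, cpow_one, Lk]
  have hyd : ∀ d : ℕ, ((μ (m / d) : ℤ) : ℂ) * y ^ d
      = ((μ (m / d) : ℤ) : ℂ) * (k : ℂ) ^ d * (x : ℂ) ^ d := by
    intro d; rw [hy]; push_cast; ring
  rw [Finset.sum_congr rfl fun d _ => hyd d]
  push_cast
  field_simp

theorem stmt5 (k : ℕ) (hk : 0 < k) (x : ℝ) (hx : |(k : ℝ) * x| < 1)
    (s : ℂ) (hs : 1 < s.re) :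
    riemannZeta s * ∑' n : ℕ, ((Lk k x (2 * n + 1) : ℝ) : ℂ) / ((2 * n + 1 : ℕ) : ℂ) ^ (s - 1)
      = ((2 : ℂ) ^ s * Li s (((k : ℝ) * x : ℝ) : ℂ) - Li s ((((k : ℝ) * x : ℝ) : ℂ) ^ 2)) /
          ((2 : ℂ) ^ s - 1) := by
  set y : ℂ := (((k : ℝ) * x : ℝ) : ℂ) with hy_def
  have hy : ‖y‖ ≤ 1 := by
    rw [hy_def, Complex.norm_real]
    exact hx.le
  have hsum : (∑' n : ℕ, ((Lk k x (2 * n + 1) : ℝ) : ℂ) / ((2 * n + 1 : ℕ) : ℂ) ^ (s - 1))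
      = LSeries (Modd ⍟ Fodd y) s := by
    have hG : LSeriesSummable (Modd ⍟ Fodd y) s :=
      (summ_Modd hs).convolution (summ_Fodd hy hs)
    rw [LSeries_split hG]
    have he : ∀ t : ℕ, term (Modd ⍟ Fodd y) s (2 * t) = 0 := by
      intro t
      rcases eq_or_ne t 0 with rfl | ht
      · simp
      · rw [term_of_ne_zero (by positivity), conv_even y (Nat.not_odd_iff_even.mpr
          (even_two_mul t)), zero_div]
    rw [tsum_congr he, tsum_zero, zero_add]
    exact tsum_congr fun n => term_step hy_def s (odd_two_mul_add_one n)
  rw [hsum, LSeries_convolution' (summ_Modd hs) (summ_Fodd hy hs), ← mul_assoc,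
    zeta_mul_Modd hs, LSeries_Fodd hy hs]
  have h2 := two_cpow_ne_zero s
  have h21 : (2:ℂ)^s - 1 ≠ 0 := sub_ne_zero.mpr (two_cpow_ne_one hs)
  field_simp
end

section
/- Let k be a positive integer, x a real number with |kx| < 1, and s a complex number with Re(s) > 1. Then ζ(s) · Σ_{n=1}^∞ L_k(x:2n)/(2n)^{s−1} = (Li_s(k²x²) − Li_s(kx))/(2^s − 1), where ζ is the Riemann zeta function and Li_s(z) := Σ_{n=1}^∞ z^n/n^s. -/
open scoped BigOperators

open Complex LSeries ArithmeticFunction Finset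
open scoped LSeries.notation

namespace Stmt6Aux

/-- The arithmetic function `n ↦ t^n` (with value `0` at `0`). -/
noncomputable def P (t : ℂ) : ArithmeticFunction ℂ := toArithmeticFunction (fun n => t ^ n)

lemma P_apply {t : ℂ} {n : ℕ} (hn : n ≠ 0) : P t n = t ^ n := by
  simp [P, toArithmeticFunction, hn]

/-- `A t = μ * P t` as an arithmetic function. -/
noncomputable def A (t : ℂ) : ArithmeticFunction ℂ :=
  ((ArithmeticFunction.moebius : ArithmeticFunction ℤ) : ArithmeticFunction ℂ) * P t

lemma A_apply (t : ℂ) (n : ℕ) :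
    A t n = ∑ d ∈ n.divisors, ((ArithmeticFunction.moebius (n / d) : ℤ) : ℂ) * t ^ d := by
  rcases eq_or_ne n 0 with rfl | hn
  · simp
  · rw [A, ArithmeticFunction.mul_apply,
      Nat.sum_divisorsAntidiagonal'
        (f := fun i j => (((ArithmeticFunction.moebius : ArithmeticFunction ℤ)
          : ArithmeticFunction ℂ) i) * P t j)]
    refine Finset.sum_congr rfl fun d hd => ?_
    rw [ArithmeticFunction.intCoe_apply, P_apply (Nat.pos_of_mem_divisors hd).ne']

lemma sum_divisors_A (t : ℂ) {n : ℕ} (hn : n ≠ 0) :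
    ∑ d ∈ n.divisors, A t d = t ^ n := by
  have h1 : ((ArithmeticFunction.zeta : ArithmeticFunction ℕ) : ArithmeticFunction ℂ) *
      A t = P t := by
    rw [A, ← mul_assoc, ArithmeticFunction.coe_zeta_mul_coe_moebius, one_mul]
  have h2 := ArithmeticFunction.coe_zeta_mul_apply (f := A t) (x := n)
  rw [h1, P_apply hn] at h2
  exact h2.symm

lemma filter_not_even_divisors {n : ℕ} (hn : n ≠ 0) :
    n.divisors.filter (fun d => ¬ Even d) = (ordCompl[2] n).divisors := by
  ext d
  simp only [Finset.mem_filter, Nat.mem_divisors, hn, ne_eq, not_false_eq_true, and_true,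
    (Nat.ordCompl_pos 2 hn).ne']
  constructor
  · rintro ⟨hd, hodd⟩
    have hd2 : ¬ (2 ∣ d) := by
      rw [Nat.not_even_iff] at hodd
      omega
    have hcop : d.Coprime (2 ^ (n.factorization 2)) :=
      Nat.Coprime.pow_right _ ((Nat.prime_two.coprime_iff_not_dvd.mpr hd2).symm)
    exact hcop.dvd_of_dvd_mul_left (by rwa [Nat.ordProj_mul_ordCompl_eq_self])
  · intro hd
    refine ⟨hd.trans (Nat.ordCompl_dvd n 2), fun hev => ?_⟩
    obtain ⟨r, hr⟩ := hev
    exact Nat.not_dvd_ordCompl Nat.prime_two hn (dvd_trans ⟨r, by omega⟩ hd)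

/-- `A t` restricted to even numbers. -/
noncomputable def g (t : ℂ) : ℕ → ℂ := fun n => if Even n then A t n else 0

lemma conv_one_g {t : ℂ} {n : ℕ} (hn : n ≠ 0) :
    ((1 : ℕ → ℂ) ⍟ g t) n = t ^ n - t ^ (ordCompl[2] n) := by
  have h0 : ((1 : ℕ → ℂ) ⍟ g t) n = ∑ d ∈ n.divisors, g t d := by
    rw [congrFun (LSeries.convolution_def (1 : ℕ → ℂ) (g t)) n,
      Nat.sum_divisorsAntidiagonal' (f := fun i j => (1 : ℕ → ℂ) i * g t j)]
    simp [Pi.one_apply]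
  rw [h0]
  have h1 : ∑ d ∈ n.divisors, g t d
      = ∑ d ∈ n.divisors.filter (fun d => Even d), A t d := by
    rw [Finset.sum_filter]; rfl
  have h2 : (∑ d ∈ n.divisors.filter (fun d => Even d), A t d)
      + ∑ d ∈ n.divisors.filter (fun d => ¬ Even d), A t d
      = ∑ d ∈ n.divisors, A t d := Finset.sum_filter_add_sum_filter_not _ _ _
  rw [filter_not_even_divisors hn, sum_divisors_A t hn,
    sum_divisors_A t (Nat.ordCompl_pos 2 hn).ne'] at h2
  rw [h1, eq_sub_iff_add_eq, h2]

/-- `c t n = t^n - t^(oddPart n)` -/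
noncomputable def c (t : ℂ) : ℕ → ℂ := fun n => t ^ n - t ^ (ordCompl[2] n)

lemma c_odd (t : ℂ) (m : ℕ) : c t (2 * m + 1) = 0 := by
  have h : ordCompl[2] (2 * m + 1) = 2 * m + 1 := by
    rw [Nat.factorization_eq_zero_of_not_dvd (by omega), pow_zero, Nat.div_one]
  simp [c, h]

lemma ordCompl_two_mul {m : ℕ} (hm : m ≠ 0) : ordCompl[2] (2 * m) = ordCompl[2] m := by
  rw [Nat.ordCompl_mul]
  have : ordCompl[2] 2 = 1 := by
    rw [Nat.Prime.factorization_self Nat.prime_two]; norm_num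
  rw [this, one_mul]

lemma c_two_mul (t : ℂ) {m : ℕ} (hm : m ≠ 0) :
    c t (2 * m) = (t ^ (2 * m) - t ^ m) + c t m := by
  simp only [c, ordCompl_two_mul hm]; ring

/-- `c' t n = t^(2n) - t^n` -/
noncomputable def c' (t : ℂ) : ℕ → ℂ := fun n => t ^ (2 * n) - t ^ n

end Stmt6Aux

open Stmt6Aux

theorem stmt6 (k : ℕ) (hk : 0 < k) (x : ℝ) (hx : |(k : ℝ) * x| < 1)
    (s : ℂ) (hs : 1 < s.re) :
    riemannZeta s *
        ∑' n : ℕ, ((Lk k x (2 * (n + 1)) : ℝ) : ℂ) / ((2 * (n + 1) : ℕ) : ℂ) ^ (s - 1)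
      = (Li s ((((k : ℝ) * x : ℝ) : ℂ) ^ 2) - Li s (((k : ℝ) * x : ℝ) : ℂ)) /
          ((2 : ℂ) ^ s - 1) := by
  set t : ℂ := (((k : ℝ) * x : ℝ) : ℂ) with ht_def
  have ht : ‖t‖ < 1 := by rwa [ht_def, Complex.norm_real, Real.norm_eq_abs]
  have ht1 : ‖t‖ ≤ 1 := ht.le
  have ht0 : (0:ℝ) ≤ ‖t‖ := norm_nonneg _
  -- bound on A
  have hA : ∀ n : ℕ, ‖A t n‖ ≤ (1 - ‖t‖)⁻¹ := by
    intro n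
    have hpos : (0:ℝ) < 1 - ‖t‖ := by linarith
    rcases eq_or_ne n 0 with rfl | hn
    · simp only [ArithmeticFunction.map_zero, norm_zero]
      exact inv_nonneg.mpr hpos.le
    · rw [A_apply]
      calc ‖∑ d ∈ n.divisors, ((ArithmeticFunction.moebius (n / d) : ℤ) : ℂ) * t ^ d‖
          ≤ ∑ d ∈ n.divisors, ‖((ArithmeticFunction.moebius (n / d) : ℤ) : ℂ) * t ^ d‖ :=
            norm_sum_le _ _
        _ ≤ ∑ d ∈ n.divisors, ‖t‖ ^ d := by
            refine Finset.sum_le_sum fun d hd => ?_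
            rw [norm_mul, norm_pow]
            have h1 : ‖((ArithmeticFunction.moebius (n / d) : ℤ) : ℂ)‖ ≤ 1 := by
              rw [Complex.norm_intCast]
              exact_mod_cast (ArithmeticFunction.abs_moebius_le_one (n := n / d))
            have h2 : (0:ℝ) ≤ ‖t‖ ^ d := by positivity
            nlinarith
        _ ≤ ∑ d ∈ Finset.range (n + 1), ‖t‖ ^ d := by
            refine Finset.sum_le_sum_of_subset_of_nonneg ?_ (fun i _ _ => by positivity)
            intro d hd
            exact Finset.mem_range.mpr (Nat.lt_succ_of_le (Nat.divisor_le hd))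
        _ ≤ ∑' d : ℕ, ‖t‖ ^ d :=
            Summable.sum_le_tsum _ (fun i _ => by positivity) (summable_geometric_of_lt_one ht0 ht)
        _ = (1 - ‖t‖)⁻¹ := tsum_geometric_of_lt_one ht0 ht
  -- summability statements
  have hSg : LSeriesSummable (g t) s := by
    refine LSeriesSummable_of_bounded_of_one_lt_re (m := (1 - ‖t‖)⁻¹) (fun n _ => ?_) hs
    simp only [g]
    split
    · exact hA n
    · simp only [norm_zero]
      have hpos : (0:ℝ) < 1 - ‖t‖ := by linarith
      positivity
  have hS1 : LSeriesSummable 1 s := LSeriesSummable_one_iff.mpr hs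
  have hSc : LSeriesSummable (c t) s := by
    refine LSeriesSummable_of_bounded_of_one_lt_re (m := 2) (fun n _ => ?_) hs
    calc ‖c t n‖ ≤ ‖t ^ n‖ + ‖t ^ (ordCompl[2] n)‖ := norm_sub_le _ _
      _ ≤ 1 + 1 := by
          rw [norm_pow, norm_pow]
          gcongr <;> [exact pow_le_one₀ ht0 ht1; exact pow_le_one₀ ht0 ht1]
      _ = 2 := by norm_num
  have hSc' : LSeriesSummable (c' t) s := by
    refine LSeriesSummable_of_bounded_of_one_lt_re (m := 2) (fun n _ => ?_) hs
    calc ‖c' t n‖ ≤ ‖t ^ (2 * n)‖ + ‖t ^ n‖ := norm_sub_le _ _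
      _ ≤ 1 + 1 := by
          rw [norm_pow, norm_pow]
          gcongr <;> [exact pow_le_one₀ ht0 ht1; exact pow_le_one₀ ht0 ht1]
      _ = 2 := by norm_num
  have hSp : ∀ z : ℂ, ‖z‖ ≤ 1 →
      LSeriesSummable (fun n => z ^ n) s := by
    intro z hz
    refine LSeriesSummable_of_bounded_of_one_lt_re (m := 1) (fun n _ => ?_) hs
    rw [norm_pow]
    exact pow_le_one₀ (norm_nonneg _) hz
  -- Li as LSeries
  have hLi : ∀ z : ℂ, LSeries (fun n => z ^ n) s = Li s z := by
    intro z
    have hinj : Function.Injective (fun n : ℕ => n + 1) := fun a b h => by simpa using h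
    have hsupp : Function.support (term (fun n => z ^ n) s) ⊆ Set.range (fun n : ℕ => n + 1) := by
      intro n hn
      rcases eq_or_ne n 0 with rfl | h
      · simp at hn
      · exact ⟨n - 1, show n - 1 + 1 = n by omega⟩
    rw [LSeries, ← Function.Injective.tsum_eq hinj hsupp, Li]
    refine tsum_congr fun n => ?_
    rw [term_of_ne_zero (by omega : n + 1 ≠ 0)]
  -- the given series is LSeries (g t) s
  have hgiven :
      (∑' n : ℕ, ((Lk k x (2 * (n + 1)) : ℝ) : ℂ) / ((2 * (n + 1) : ℕ) : ℂ) ^ (s - 1))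
        = LSeries (g t) s := by
    have hinj : Function.Injective (fun n : ℕ => 2 * (n + 1)) := fun a b h => by simpa using h
    have hsupp : Function.support (term (g t) s) ⊆ Set.range (fun n : ℕ => 2 * (n + 1)) := by
      intro n hn
      rcases eq_or_ne n 0 with rfl | h
      · simp at hn
      by_cases he : Even n
      · obtain ⟨m, hm⟩ := he
        exact ⟨m - 1, show 2 * (m - 1 + 1) = n by omega⟩
      · exfalso
        apply hn
        rw [term_of_ne_zero h]
        simp [g, he]
    rw [LSeries, ← Function.Injective.tsum_eq hinj hsupp]
    refine tsum_congr fun n => ?_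
    have hN : (2 * (n + 1) : ℕ) ≠ 0 := by omega
    rw [term_of_ne_zero hN]
    have hNe : Even (2 * (n + 1)) := ⟨n + 1, by ring⟩
    simp only [g, hNe, if_pos]
    rw [A_apply]
    -- now pure computation
    have hNC : ((2 * (n + 1) : ℕ) : ℂ) ≠ 0 := by exact_mod_cast hN
    have hcast : ((Lk k x (2 * (n + 1)) : ℝ) : ℂ)
        = (1 / ((2 * (n + 1) : ℕ) : ℂ)) *
          ∑ d ∈ (2 * (n + 1)).divisors,
            ((ArithmeticFunction.moebius ((2 * (n + 1)) / d) : ℤ) : ℂ) * t ^ d := by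
      rw [Lk]
      push_cast
      refine congrArg _ (Finset.sum_congr rfl fun d hd => ?_)
      rw [ht_def]
      push_cast
      ring
    rw [hcast, Complex.cpow_sub _ _ hNC, Complex.cpow_one]
    have hNs : ((2 * (n + 1) : ℕ) : ℂ) ^ s ≠ 0 :=
      fun h => hNC ((Complex.cpow_eq_zero_iff _ _).mp h).1
    have hNC2 : (2 * ((n : ℂ) + 1)) ≠ 0 := by push_cast at hNC; exact hNC
    have hNs2 : (2 * ((n : ℂ) + 1)) ^ s ≠ 0 := by push_cast at hNs; exact hNs
    push_cast
    field_simp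
  -- functional equation for LSeries (c t) s
  have h2s0 : (2 : ℂ) ^ s ≠ 0 := by
    simp [Complex.cpow_eq_zero_iff]
  have h2s1 : (2 : ℂ) ^ s - 1 ≠ 0 := by
    have hnorm : ‖(2 : ℂ) ^ s‖ = (2 : ℝ) ^ s.re := by
      rw [show ((2 : ℂ)) = ((2 : ℝ) : ℂ) by norm_num,
        Complex.norm_cpow_eq_rpow_re_of_pos (by norm_num)]
    have hgt : 1 < ‖(2 : ℂ) ^ s‖ := by
      rw [hnorm]
      exact (Real.one_lt_rpow_iff_of_pos (by norm_num)).mpr (Or.inl ⟨by norm_num, by linarith⟩)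
    intro h
    rw [sub_eq_zero] at h
    rw [h, norm_one] at hgt
    exact lt_irrefl _ hgt
  have hodd : ∀ m : ℕ, term (c t) s (2 * m + 1) = 0 := by
    intro m
    rw [term_of_ne_zero (by omega : 2 * m + 1 ≠ 0), c_odd, zero_div]
  have heven : ∀ m : ℕ, term (c t) s (2 * m)
      = (2 : ℂ) ^ (-s) * (term (c' t) s m + term (c t) s m) := by
    intro m
    rcases eq_or_ne m 0 with rfl | hm
    · simp
    · have h2m : (2 * m : ℕ) ≠ 0 := by omega
      rw [term_of_ne_zero h2m, term_of_ne_zero hm, term_of_ne_zero hm, c_two_mul t hm]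
      have hsplit2 : ((2 * m : ℕ) : ℂ) ^ s = (2 : ℂ) ^ s * ((m : ℕ) : ℂ) ^ s := by
        have h1 : ((2 * m : ℕ) : ℂ) = ((2 : ℝ) : ℂ) * ((m : ℝ) : ℂ) := by push_cast; ring
        rw [h1, mul_cpow_ofReal_nonneg (by norm_num) (by positivity)]
        norm_cast
      have hms : ((m : ℕ) : ℂ) ^ s ≠ 0 := by
        simp [Complex.cpow_eq_zero_iff, Nat.cast_ne_zero, hm]
      rw [hsplit2, Complex.cpow_neg]
      show (c' t m + c t m) / ((2:ℂ)^s * (m:ℂ)^s) = ((2:ℂ)^s)⁻¹ * (c' t m / (m:ℂ)^s + c t m / (m:ℂ)^s)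
      field_simp
  have hSe : Summable fun m : ℕ => term (c t) s (2 * m) :=
    hSc.comp_injective (fun a b h => by simpa using h)
  have hSo : Summable fun m : ℕ => term (c t) s (2 * m + 1) :=
    hSc.comp_injective (fun a b h => by simpa using h)
  have hkey := tsum_even_add_odd hSe hSo
  have hzero : (∑' m : ℕ, term (c t) s (2 * m + 1)) = 0 := by
    simpa using tsum_congr fun m => hodd m
  have heq : (2 : ℂ) ^ (-s) * (LSeries (c' t) s + LSeries (c t) s) = LSeries (c t) s := by
    have h1 : (∑' m : ℕ, term (c t) s (2 * m))
        = (2 : ℂ) ^ (-s) * (LSeries (c' t) s + LSeries (c t) s) := by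
      rw [tsum_congr heven, tsum_mul_left, Summable.tsum_add hSc' hSc]
      rfl
    rw [← h1]
    rw [hzero, add_zero] at hkey
    exact hkey
  have hLc' : LSeries (c' t) s = Li s (t ^ 2) - Li s t := by
    have hterm : ∀ n : ℕ, term (c' t) s n
        = term (fun n => (t ^ 2) ^ n) s n - term (fun n => t ^ n) s n := by
      intro n
      rcases eq_or_ne n 0 with rfl | hn
      · simp
      · rw [term_of_ne_zero hn, term_of_ne_zero hn, term_of_ne_zero hn]
        rw [← sub_div, c']
        congr 2
        rw [← pow_mul]
    have ht2 : ‖t ^ 2‖ ≤ 1 := by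
      rw [norm_pow]; exact pow_le_one₀ ht0 ht1
    rw [LSeries, tsum_congr hterm, Summable.tsum_sub (hSp _ ht2) (hSp _ ht1)]
    rw [show (∑' n, term (fun n => (t^2)^n) s n) = LSeries (fun n => (t^2)^n) s from rfl,
      show (∑' n, term (fun n => t^n) s n) = LSeries (fun n => t^n) s from rfl,
      hLi, hLi]
  -- main computation
  rw [hgiven, ← LSeries_one_eq_riemannZeta hs, ← LSeries_convolution' hS1 hSg]
  have hconv : LSeries ((1 : ℕ → ℂ) ⍟ g t) s = LSeries (c t) s :=
    LSeries_congr (fun {n} hn => conv_one_g hn) s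
  rw [hconv]
  -- solve the linear equation
  have h2 : LSeries (c' t) s + LSeries (c t) s = (2 : ℂ) ^ s * LSeries (c t) s := by
    have h3 := heq
    rw [Complex.cpow_neg, inv_mul_eq_iff_eq_mul₀ h2s0] at h3
    exact h3
  have : LSeries (c t) s * ((2 : ℂ) ^ s - 1) = Li s (t ^ 2) - Li s t := by
    rw [← hLc']
    linear_combination -h2
  rw [eq_div_iff h2s1]
  exact this
end

section
/- Let k be a positive integer, x a real number with |kx| < 1, and s a complex number with Re(s) > 2. Then ζ(s) · Σ_{n=1}^∞ (n·N_k(x:n))/n^s = ζ(s−1) · Li_s(kx), where ζ is the Riemann zeta function and Li_s(z) := Σ_{n=1}^∞ z^n/n^s. (The series Σ_{n=1}^∞ (n·N_k(x:n))/n^s converges absolutely for Re(s) > 2.) -/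
open scoped BigOperators

/-- `N_k(x : n) = (1/n) * ∑_{d ∣ n} φ(n/d) k^d x^d`. -/
noncomputable def Nk (k : ℕ) (x : ℝ) (n : ℕ) : ℝ :=
  (1 / (n : ℝ)) * ∑ d ∈ n.divisors, (Nat.totient (n / d) : ℝ) * (k : ℝ) ^ d * x ^ d

open LSeries
open scoped LSeries.notation

theorem stmt7 (k : ℕ) (hk : 0 < k) (x : ℝ) (hx : |(k : ℝ) * x| < 1)
    (s : ℂ) (hs : 2 < s.re) :
    Summable (fun n : ℕ =>
      ‖(((n + 1 : ℕ) : ℂ) * ((Nk k x (n + 1) : ℝ) : ℂ)) / ((n + 1 : ℕ) : ℂ) ^ s‖) ∧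
    riemannZeta s *
        ∑' n : ℕ, (((n + 1 : ℕ) : ℂ) * ((Nk k x (n + 1) : ℝ) : ℂ)) / ((n + 1 : ℕ) : ℂ) ^ s
      = riemannZeta (s - 1) * Li s (((k : ℝ) * x : ℝ) : ℂ) := by
  set c : ℂ := (((k : ℝ) * x : ℝ) : ℂ) with hc
  set f : ℕ → ℂ := fun n => c ^ n with hfdef
  set φ' : ℕ → ℂ := fun n => (Nat.totient n : ℂ) with hφdef
  set g : ℕ → ℂ := fun n => (n : ℂ) with hgdef
  have hs1 : 1 < s.re := by linarith
  have hcnorm : ‖c‖ < 1 := by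
    rw [hc, Complex.norm_real, Real.norm_eq_abs]; exact hx
  -- key pointwise identity
  have hkey : ∀ n : ℕ, n ≠ 0 → (φ' ⍟ f) n = (n : ℂ) * ((Nk k x n : ℝ) : ℂ) := by
    intro n hn
    have hn0 : ((n : ℝ)) ≠ 0 := Nat.cast_ne_zero.mpr hn
    have hn0c : ((n : ℂ)) ≠ 0 := Nat.cast_ne_zero.mpr hn
    rw [LSeries.convolution_def]
    show (∑ p ∈ n.divisorsAntidiagonal, φ' p.1 * f p.2) = _
    rw [Nat.sum_divisorsAntidiagonal' (f := fun a b => φ' a * f b)]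
    rw [Nk]
    push_cast
    rw [Finset.mul_sum, Finset.mul_sum]
    refine Finset.sum_congr rfl fun d hd => ?_
    simp only [hφdef, hfdef, hc]
    push_cast
    rw [mul_pow]
    field_simp
  -- norm summability of the convolution L-series
  have hb : ∀ n : ℕ, n ≠ 0 → ‖(φ' ⍟ f) n‖ ≤ (n : ℝ) := by
    intro n hn
    rw [LSeries.convolution_def]
    calc ‖∑ p ∈ n.divisorsAntidiagonal, φ' p.1 * f p.2‖
        ≤ ∑ p ∈ n.divisorsAntidiagonal, ‖φ' p.1 * f p.2‖ := norm_sum_le _ _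
      _ ≤ ∑ p ∈ n.divisorsAntidiagonal, (Nat.totient p.1 : ℝ) := by
          refine Finset.sum_le_sum fun p _ => ?_
          rw [norm_mul]
          simp only [hφdef, hfdef]
          rw [Complex.norm_natCast, norm_pow]
          calc (Nat.totient p.1 : ℝ) * ‖c‖ ^ p.2
              ≤ (Nat.totient p.1 : ℝ) * 1 := by
                gcongr
                exact pow_le_one₀ (norm_nonneg _) hcnorm.le
            _ = _ := mul_one _
      _ = (n : ℝ) := by
          rw [Nat.sum_divisorsAntidiagonal (f := fun a b => (Nat.totient a : ℝ))]
          rw [← Nat.cast_sum]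
          norm_cast
          exact Nat.sum_totient n
  have hnorm_sum : Summable fun n : ℕ => ‖term (φ' ⍟ f) s n‖ := by
    have h2 : Summable fun n : ℕ => ((n : ℝ) ^ (1 - s.re)) := by
      rw [Real.summable_nat_rpow]; linarith
    refine h2.of_nonneg_of_le (fun n => norm_nonneg _) (fun n => ?_)
    rcases eq_or_ne n 0 with rfl | hn
    · rw [term_zero, norm_zero]
      positivity
    · rw [norm_term_eq, if_neg hn]
      have hnpos : (0 : ℝ) < (n : ℝ) := by
        exact_mod_cast Nat.pos_of_ne_zero hn
      calc ‖(φ' ⍟ f) n‖ / (n : ℝ) ^ s.re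
          ≤ (n : ℝ) / (n : ℝ) ^ s.re := by
            gcongr
            · exact hb n hn
        _ = (n : ℝ) ^ (1 - s.re) := by
            rw [Real.rpow_sub hnpos, Real.rpow_one]
  -- summability facts
  have hfs : LSeriesSummable f s := by
    refine LSeriesSummable_of_le_const_mul_rpow (x := 1) hs1 ⟨1, fun n hn => ?_⟩
    simp only [hfdef, norm_pow]
    rw [sub_self, Real.rpow_zero, mul_one]
    exact pow_le_one₀ (norm_nonneg _) hcnorm.le
  have hφs : LSeriesSummable φ' s := by
    refine LSeriesSummable_of_le_const_mul_rpow (x := 2) hs ⟨1, fun n hn => ?_⟩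
    simp only [hφdef, Complex.norm_natCast]
    rw [one_mul]
    rw [show (2 : ℝ) - 1 = 1 by norm_num, Real.rpow_one]
    exact_mod_cast Nat.totient_le n
  have hgs : LSeriesSummable g s := by
    refine LSeriesSummable_of_le_const_mul_rpow (x := 2) hs ⟨1, fun n hn => ?_⟩
    simp only [hgdef, Complex.norm_natCast]
    rw [one_mul]
    rw [show (2 : ℝ) - 1 = 1 by norm_num, Real.rpow_one]
  have hones : LSeriesSummable 1 s := LSeriesSummable_one_iff.mpr hs1
  have hconv : LSeriesSummable (φ' ⍟ f) s := hnorm_sum.of_norm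
  -- associativity
  have hassoc : (1 : ℕ → ℂ) ⍟ (φ' ⍟ f) = ((1 : ℕ → ℂ) ⍟ φ') ⍟ f := by
    simp only [LSeries.convolution, ArithmeticFunction.toArithmeticFunction_eq_self, mul_assoc]
  -- 1 ⍟ φ' = g
  have hid : (1 : ℕ → ℂ) ⍟ φ' = g := by
    funext n
    rcases eq_or_ne n 0 with rfl | hn
    · simp [hgdef]
    · rw [LSeries.convolution_def]
      simp only [Pi.one_apply, one_mul]
      rw [Nat.sum_divisorsAntidiagonal (f := fun a b => φ' b)]
      simp only [hφdef, hgdef]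
      rw [← Nat.cast_sum]
      rw [Nat.sum_div_divisors n Nat.totient, Nat.sum_totient]
  -- LSeries g s = ζ(s-1)
  have hgz : LSeries g s = riemannZeta (s - 1) := by
    have heq : LSeries g s = LSeries 1 (s - 1) := by
      unfold LSeries
      refine tsum_congr fun n => ?_
      rcases eq_or_ne n 0 with rfl | hn
      · simp
      · rw [term_of_ne_zero hn, term_of_ne_zero hn]
        have hn0 : ((n : ℂ)) ≠ 0 := Nat.cast_ne_zero.mpr hn
        rw [Pi.one_apply, hgdef]
        rw [show (n : ℂ) ^ s = (n : ℂ) * (n : ℂ) ^ (s - 1) by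
          conv_lhs => rw [show s = 1 + (s - 1) by ring]
          rw [Complex.cpow_add _ _ hn0, Complex.cpow_one]]
        rw [← div_div, div_self hn0]
    rw [heq]
    exact LSeries_one_eq_riemannZeta (by simp only [Complex.sub_re, Complex.one_re]; linarith)
  -- LSeries f s = Li s c
  have hfLi : LSeries f s = Li s c := by
    unfold LSeries Li
    rw [Summable.tsum_eq_zero_add hfs]
    rw [term_zero, zero_add]
    refine tsum_congr fun n => ?_
    rw [term_of_ne_zero (Nat.succ_ne_zero n)]
  -- the main tsum equals LSeries (φ' ⍟ f) s
  have hT : (∑' n : ℕ, (((n + 1 : ℕ) : ℂ) * ((Nk k x (n + 1) : ℝ) : ℂ)) / ((n + 1 : ℕ) : ℂ) ^ s)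
      = LSeries (φ' ⍟ f) s := by
    rw [LSeries, Summable.tsum_eq_zero_add hconv, term_zero, zero_add]
    refine tsum_congr fun n => ?_
    rw [term_of_ne_zero (Nat.succ_ne_zero n), hkey (n + 1) (Nat.succ_ne_zero n)]
  constructor
  · have hcomp := hnorm_sum.comp_injective (add_left_injective 1)
    refine hcomp.congr fun n => ?_
    simp only [Function.comp]
    rw [term_of_ne_zero (Nat.succ_ne_zero n), hkey (n + 1) (Nat.succ_ne_zero n)]
  · rw [hT, ← LSeries_one_eq_riemannZeta hs1, ← LSeries_convolution' hones hconv, hassoc, hid,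
      LSeries_convolution' hgs hfs, hgz, hfLi]
end

section
/- Let k be a positive integer, x a real number with |kx| < 1, and s a complex number with Re(s) > 2. Then Σ_{n=1}^∞ N_k(x:2n−1)/(2n−1)^{s−1} = (Σ_{n odd, n ≥ 1} φ(n)/n^s) · (Σ_{m odd, m ≥ 1} (kx)^m/m^s), where both factors on the right converge absolutely. -/
open scoped BigOperators

open LSeries

private lemma odd_inj : Function.Injective (fun m : ℕ => 2 * m + 1) := by
  intro a b h
  dsimp only at h
  omega

private lemma odd_of_dvd {d m : ℕ} (hm : Odd m) (hd : d ∣ m) : Odd d := by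
  obtain ⟨e, rfl⟩ := hd
  exact (Nat.odd_mul.mp hm).1

theorem stmt9 (k : ℕ) (hk : 0 < k) (x : ℝ) (hx : |(k : ℝ) * x| < 1)
    (s : ℂ) (hs : 2 < s.re) :
    Summable (fun n : ℕ =>
      ‖((Nat.totient (2 * n + 1) : ℕ) : ℂ) / ((2 * n + 1 : ℕ) : ℂ) ^ s‖) ∧
    Summable (fun m : ℕ =>
      ‖((((k : ℝ) * x : ℝ) : ℂ)) ^ (2 * m + 1) / ((2 * m + 1 : ℕ) : ℂ) ^ s‖) ∧
    ∑' n : ℕ, ((Nk k x (2 * n + 1) : ℝ) : ℂ) / ((2 * n + 1 : ℕ) : ℂ) ^ (s - 1)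
      = (∑' n : ℕ, ((Nat.totient (2 * n + 1) : ℕ) : ℂ) / ((2 * n + 1 : ℕ) : ℂ) ^ s) *
        (∑' m : ℕ, ((((k : ℝ) * x : ℝ) : ℂ)) ^ (2 * m + 1) / ((2 * m + 1 : ℕ) : ℂ) ^ s) := by
  set c : ℂ := (((k : ℝ) * x : ℝ) : ℂ) with hc
  have hcnorm : ‖c‖ ≤ 1 := by
    rw [hc, Complex.norm_real, Real.norm_eq_abs]
    exact hx.le
  have hceq : c = (k : ℂ) * (x : ℂ) := by rw [hc]; push_cast; ring
  set F : ℕ → ℂ := fun n => if Odd n then ((Nat.totient n : ℕ) : ℂ) else 0 with hF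
  set G : ℕ → ℂ := fun n => if Odd n then c ^ n else 0 with hG
  -- summability of the two L-series
  have hFs : LSeriesSummable F s := by
    apply LSeriesSummable_of_le_const_mul_rpow (x := 2) hs
    refine ⟨1, fun n hn => ?_⟩
    have hFle : ‖F n‖ ≤ (n : ℝ) := by
      by_cases h : Odd n
      · simp only [hF, h, if_true, Complex.norm_natCast]
        exact_mod_cast Nat.totient_le n
      · simp only [hF, h, if_false, norm_zero]
        positivity
    calc ‖F n‖ ≤ (n : ℝ) := hFle
      _ = 1 * (n : ℝ) ^ ((2 : ℝ) - 1) := by norm_num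
  have hGs : LSeriesSummable G s := by
    apply LSeriesSummable_of_le_const_mul_rpow (x := 1) (by linarith)
    refine ⟨1, fun n hn => ?_⟩
    have hGle : ‖G n‖ ≤ 1 := by
      by_cases h : Odd n
      · simp only [hG, h, if_true, norm_pow]
        calc ‖c‖ ^ n ≤ 1 ^ n := pow_le_pow_left₀ (norm_nonneg c) hcnorm n
          _ = 1 := one_pow n
      · simp [hG, h]
    calc ‖G n‖ ≤ 1 := hGle
      _ = 1 * (n : ℝ) ^ ((1 : ℝ) - 1) := by rw [sub_self, Real.rpow_zero]; ring
  -- terms at odd integers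
  have hoddne : ∀ m : ℕ, (2 * m + 1 : ℕ) ≠ 0 := fun m => by omega
  have hodd : ∀ m : ℕ, Odd (2 * m + 1) := fun m => ⟨m, by ring⟩
  have htermF : ∀ m : ℕ, term F s (2 * m + 1)
      = ((Nat.totient (2 * m + 1) : ℕ) : ℂ) / ((2 * m + 1 : ℕ) : ℂ) ^ s := by
    intro m
    rw [term_of_ne_zero (hoddne m)]
    simp only [hF, hodd m, if_true]
  have htermG : ∀ m : ℕ, term G s (2 * m + 1)
      = c ^ (2 * m + 1) / ((2 * m + 1 : ℕ) : ℂ) ^ s := by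
    intro m
    rw [term_of_ne_zero (hoddne m)]
    simp only [hG, hodd m, if_true]
  -- support of the terms
  have hsuppF : Function.support (term F s) ⊆ Set.range (fun m : ℕ => 2 * m + 1) := by
    intro n hn
    rcases Nat.even_or_odd n with he | ho
    · exfalso
      rcases Nat.eq_zero_or_pos n with rfl | hpos
      · exact hn (term_zero F s)
      · apply hn
        rw [term_of_ne_zero hpos.ne']
        simp only [hF, Nat.not_odd_iff_even.mpr he, if_false, zero_div]
    · obtain ⟨j, hj⟩ := ho
      exact ⟨j, by dsimp only; omega⟩
  have hsuppG : Function.support (term G s) ⊆ Set.range (fun m : ℕ => 2 * m + 1) := by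
    intro n hn
    rcases Nat.even_or_odd n with he | ho
    · exfalso
      rcases Nat.eq_zero_or_pos n with rfl | hpos
      · exact hn (term_zero G s)
      · apply hn
        rw [term_of_ne_zero hpos.ne']
        simp only [hG, Nat.not_odd_iff_even.mpr he, if_false, zero_div]
    · obtain ⟨j, hj⟩ := ho
      exact ⟨j, by dsimp only; omega⟩
  -- the two summability claims
  have hsum1 : Summable (fun n : ℕ =>
      ‖((Nat.totient (2 * n + 1) : ℕ) : ℂ) / ((2 * n + 1 : ℕ) : ℂ) ^ s‖) := by
    have := (hFs.norm.comp_injective odd_inj)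
    refine this.congr fun m => ?_
    simp only [Function.comp_apply, htermF m]
  have hsum2 : Summable (fun m : ℕ =>
      ‖c ^ (2 * m + 1) / ((2 * m + 1 : ℕ) : ℂ) ^ s‖) := by
    have := (hGs.norm.comp_injective odd_inj)
    refine this.congr fun m => ?_
    simp only [Function.comp_apply, htermG m]
  refine ⟨hsum1, hsum2, ?_⟩
  -- convolution identity
  have hconv : ∀ m : ℕ, Odd m →
      convolution F G m = (m : ℂ) * ((Nk k x m : ℝ) : ℂ) := by
    intro m hm
    have hm0 : m ≠ 0 := by rintro rfl; exact (Nat.not_odd_iff_even.mpr Even.zero) hm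
    have hmC : (m : ℂ) ≠ 0 := Nat.cast_ne_zero.mpr hm0
    have hNk : ((Nk k x m : ℝ) : ℂ)
        = (1 / (m : ℂ)) * ∑ d ∈ m.divisors,
            ((Nat.totient (m / d) : ℕ) : ℂ) * (k : ℂ) ^ d * (x : ℂ) ^ d := by
      rw [Nk]
      push_cast
      ring
    simp only [convolution_def]
    have hstep : ∑ p ∈ m.divisorsAntidiagonal, F p.1 * G p.2
        = ∑ p ∈ m.divisorsAntidiagonal,
            ((Nat.totient p.1 : ℕ) : ℂ) * c ^ p.2 := by
      refine Finset.sum_congr rfl fun p hp => ?_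
      obtain ⟨hpm, -⟩ := Nat.mem_divisorsAntidiagonal.mp hp
      have h1 : Odd p.1 := odd_of_dvd hm ⟨p.2, hpm.symm⟩
      have h2 : Odd p.2 := odd_of_dvd hm ⟨p.1, by rw [← hpm]; ring⟩
      simp only [hF, hG, h1, h2, if_true]
    rw [hstep,
      Nat.sum_divisorsAntidiagonal' (f := fun a b => ((Nat.totient a : ℕ) : ℂ) * c ^ b),
      hNk, ← mul_assoc, mul_one_div_cancel hmC, one_mul]
    refine Finset.sum_congr rfl fun d hd => ?_
    rw [hceq, mul_pow]
    ring
  -- L-series identity via convolution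
  have hmain := LSeries_convolution' hFs hGs
  have hL_F : LSeries F s
      = ∑' n : ℕ, ((Nat.totient (2 * n + 1) : ℕ) : ℂ) / ((2 * n + 1 : ℕ) : ℂ) ^ s := by
    rw [LSeries, ← odd_inj.tsum_eq hsuppF]
    exact tsum_congr fun m => htermF m
  have hL_G : LSeries G s
      = ∑' m : ℕ, c ^ (2 * m + 1) / ((2 * m + 1 : ℕ) : ℂ) ^ s := by
    rw [LSeries, ← odd_inj.tsum_eq hsuppG]
    exact tsum_congr fun m => htermG m
  have hsuppFG : Function.support (term (convolution F G) s)
      ⊆ Set.range (fun m : ℕ => 2 * m + 1) := by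
    intro n hn
    rcases Nat.even_or_odd n with he | ho
    · exfalso
      rcases Nat.eq_zero_or_pos n with rfl | hpos
      · exact hn (term_zero _ s)
      · apply hn
        rw [term_of_ne_zero hpos.ne']
        simp only [convolution_def]
        have hz : ∀ p ∈ n.divisorsAntidiagonal, F p.1 * G p.2 = 0 := by
          intro p hp
          obtain ⟨hpm, hn0⟩ := Nat.mem_divisorsAntidiagonal.mp hp
          rcases Nat.even_or_odd p.1 with h1 | h1
          · simp only [hF, Nat.not_odd_iff_even.mpr h1, if_false, zero_mul]
          · rcases Nat.even_or_odd p.2 with h2 | h2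
            · simp only [hG, Nat.not_odd_iff_even.mpr h2, if_false, mul_zero]
            · exact absurd (by rw [← hpm]; exact h1.mul h2) (Nat.not_odd_iff_even.mpr he)
        rw [Finset.sum_eq_zero hz, zero_div]
    · obtain ⟨j, hj⟩ := ho
      exact ⟨j, by dsimp only; omega⟩
  have hL_FG : LSeries (convolution F G) s
      = ∑' n : ℕ, ((Nk k x (2 * n + 1) : ℝ) : ℂ) / ((2 * n + 1 : ℕ) : ℂ) ^ (s - 1) := by
    rw [LSeries, ← odd_inj.tsum_eq hsuppFG]
    refine tsum_congr fun m => ?_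
    rw [term_of_ne_zero (hoddne m), hconv _ (hodd m)]
    have hm0 : ((2 * m + 1 : ℕ) : ℂ) ≠ 0 := by exact_mod_cast hoddne m
    rw [Complex.cpow_sub _ _ hm0, Complex.cpow_one]
    field_simp
  rw [← hL_F, ← hL_G, ← hL_FG]
  exact hmain
end

section
/- Let k be a positive integer, x a real number with |kx| < 1, and s a complex number with Re(s) > 2. Then ζ(s−1) · Σ_{n=1}^∞ (n·L_k(x:n))/n^s = Σ_{n=1}^∞ (n·N_k(x:n))/n^s, where ζ is the Riemann zeta function. -/
open scoped BigOperators

open ArithmeticFunction LSeries Finset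
open scoped LSeries.notation

namespace Stmt12Aux

/-- The geometric sequence as an arithmetic function. -/
noncomputable def cA (y : ℝ) : ArithmeticFunction ℂ :=
  ⟨fun n => if n = 0 then 0 else ((y : ℂ)) ^ n, rfl⟩

/-- The totient as a ℂ-valued arithmetic function. -/
noncomputable def T : ArithmeticFunction ℂ := ⟨fun n => (n.totient : ℂ), by simp⟩

noncomputable def M : ArithmeticFunction ℂ :=
  ((ArithmeticFunction.moebius : ArithmeticFunction ℤ) : ArithmeticFunction ℂ)

noncomputable def A : ArithmeticFunction ℂ :=
  ((ArithmeticFunction.id : ArithmeticFunction ℕ) : ArithmeticFunction ℂ)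

lemma hMA : M * A = T := by
  have key : ∀ n > 0,
      ∑ p ∈ n.divisorsAntidiagonal, ((moebius p.1 : ℤ) : ℂ) * (p.2 : ℂ) = (n.totient : ℂ) := by
    rw [← ArithmeticFunction.sum_eq_iff_sum_mul_moebius_eq
      (f := fun n => (n.totient : ℂ)) (g := fun n => (n : ℂ))]
    intro n hn
    exact_mod_cast congrArg (fun m : ℕ => (m : ℂ)) (Nat.sum_totient n)
  ext n
  rcases eq_or_ne n 0 with rfl | hn
  · simp
  · rw [ArithmeticFunction.mul_apply]
    have := key n (Nat.pos_of_ne_zero hn)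
    simpa [M, A, T] using this

end Stmt12Aux

open Stmt12Aux

theorem stmt12 (k : ℕ) (hk : 0 < k) (x : ℝ) (hx : |(k : ℝ) * x| < 1)
    (s : ℂ) (hs : 2 < s.re) :
    riemannZeta (s - 1) *
        ∑' n : ℕ, (((n + 1 : ℕ) : ℂ) * ((Lk k x (n + 1) : ℝ) : ℂ)) / ((n + 1 : ℕ) : ℂ) ^ s
      = ∑' n : ℕ, (((n + 1 : ℕ) : ℂ) * ((Nk k x (n + 1) : ℝ) : ℂ)) / ((n + 1 : ℕ) : ℂ) ^ s := by
  set y : ℝ := (k : ℝ) * x with hy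
  set F : ArithmeticFunction ℂ := M * cA y with hF
  set G : ArithmeticFunction ℂ := T * cA y with hG
  -- norm bounds
  have hcA_le : ∀ m : ℕ, ‖cA y m‖ ≤ 1 := by
    intro m
    rcases eq_or_ne m 0 with rfl | hm
    · simp [cA]
    · simp only [cA, ArithmeticFunction.coe_mk, if_neg hm]
      rw [norm_pow, Complex.norm_real]
      exact pow_le_one₀ (abs_nonneg _) hx.le
  have hM_le : ∀ m : ℕ, ‖M m‖ ≤ 1 := by
    intro m
    rcases moebius_eq_or m with h | h | h <;> simp [M, h]
  have hcard : ∀ n : ℕ, n ≠ 0 → (n.divisorsAntidiagonal.card : ℝ) ≤ n := by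
    intro n hn
    have h1 : n.divisorsAntidiagonal.card ≤ n.divisors.card := by
      refine Finset.card_le_card_of_injOn Prod.fst
        (fun p hp => Nat.fst_mem_divisors_of_mem_antidiagonal hp) ?_
      intro p hp q hq hpq
      have hp' := Nat.mem_divisorsAntidiagonal.mp hp
      have hq' := Nat.mem_divisorsAntidiagonal.mp hq
      have hp1 : p.1 ≠ 0 := (Nat.ne_zero_of_mem_divisorsAntidiagonal hp).1
      have h2 : p.2 = q.2 := by
        refine Nat.eq_of_mul_eq_mul_left (Nat.pos_of_ne_zero hp1) ?_
        rw [hp'.1, hpq, hq'.1]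
      exact Prod.ext hpq h2
    have h2 : n.divisors.card ≤ n := by
      calc n.divisors.card ≤ (Finset.Icc 1 n).card :=
            Finset.card_le_card (fun m hm => Finset.mem_Icc.mpr
              ⟨Nat.pos_of_mem_divisors hm, Nat.divisor_le hm⟩)
        _ = n := by rw [Nat.card_Icc]; omega
    exact_mod_cast h1.trans h2
  have hFnorm : ∀ n : ℕ, n ≠ 0 → ‖F n‖ ≤ (n : ℝ) := by
    intro n hn
    rw [hF, ArithmeticFunction.mul_apply]
    calc ‖∑ p ∈ n.divisorsAntidiagonal, M p.1 * cA y p.2‖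
        ≤ ∑ p ∈ n.divisorsAntidiagonal, ‖M p.1 * cA y p.2‖ := norm_sum_le _ _
      _ ≤ ∑ _p ∈ n.divisorsAntidiagonal, 1 := by
          refine Finset.sum_le_sum fun p _ => ?_
          rw [norm_mul]
          exact mul_le_one₀ (hM_le _) (norm_nonneg _) (hcA_le _)
      _ = (n.divisorsAntidiagonal.card : ℝ) := by simp
      _ ≤ (n : ℝ) := hcard n hn
  -- summability
  have hsumA : LSeriesSummable (↗A) s := by
    refine LSeriesSummable_of_le_const_mul_rpow (x := 2) hs ⟨1, fun n hn => ?_⟩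
    rw [show (2 : ℝ) - 1 = 1 by norm_num, Real.rpow_one, one_mul]
    simp [A]
  have hsumF : LSeriesSummable (↗F) s := by
    refine LSeriesSummable_of_le_const_mul_rpow (x := 2) hs ⟨1, fun n hn => ?_⟩
    rw [show (2 : ℝ) - 1 = 1 by norm_num, Real.rpow_one, one_mul]
    exact hFnorm n hn
  -- G = A * F
  have hGAF : G = A * F := by
    rw [hG, hF, ← mul_assoc, mul_comm A M, hMA]
  -- LSeries of A is ζ(s-1)
  have hs1 : 1 < (s - 1).re := by
    rw [Complex.sub_re, Complex.one_re]; linarith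
  have hA_eq : LSeries (↗A) s = riemannZeta (s - 1) := by
    rw [← LSeries_zeta_eq_riemannZeta hs1]
    refine tsum_congr fun n => ?_
    rcases eq_or_ne n 0 with rfl | hn
    · simp [LSeries.term_zero]
    · rw [LSeries.term_of_ne_zero hn, LSeries.term_of_ne_zero hn]
      have hn0 : (n : ℂ) ≠ 0 := Nat.cast_ne_zero.mpr hn
      have hpow : (n : ℂ) ^ s = (n : ℂ) ^ (s - 1) * (n : ℂ) := by
        conv_lhs => rw [show s = (s - 1) + 1 by ring]
        rw [Complex.cpow_add _ _ hn0, Complex.cpow_one]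
      rw [hpow]
      have hpne : (n : ℂ) ^ (s - 1) ≠ 0 := by
        rw [Complex.cpow_def_of_ne_zero hn0]
        exact Complex.exp_ne_zero _
      simp only [A, ArithmeticFunction.natCoe_apply, ArithmeticFunction.id_apply,
        ArithmeticFunction.zeta_apply, hn, if_neg hn, Nat.cast_one]
      field_simp
      simp
  -- values of F and G at n+1
  have hFval : ∀ n : ℕ, F (n + 1) = ((n + 1 : ℕ) : ℂ) * ((Lk k x (n + 1) : ℝ) : ℂ) := by
    intro n
    have hne : ((n : ℂ) + 1) ≠ 0 := Nat.cast_add_one_ne_zero n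
    have h1 : F (n + 1) = ∑ d ∈ (n + 1).divisors,
        ((moebius ((n + 1) / d) : ℤ) : ℂ) * ((y : ℂ)) ^ d := by
      rw [hF, ArithmeticFunction.mul_apply,
        Nat.sum_divisorsAntidiagonal' (f := fun a b => M a * cA y b)]
      refine Finset.sum_congr rfl fun d hd => ?_
      have hd0 : d ≠ 0 := (Nat.pos_of_mem_divisors hd).ne'
      simp [M, cA, hd0]
    rw [h1]
    unfold Lk
    push_cast
    rw [← mul_assoc, mul_one_div_cancel hne, one_mul]
    refine Finset.sum_congr rfl fun d hd => ?_
    rw [hy]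
    push_cast
    ring
  have hGval : ∀ n : ℕ, G (n + 1) = ((n + 1 : ℕ) : ℂ) * ((Nk k x (n + 1) : ℝ) : ℂ) := by
    intro n
    have hne : ((n : ℂ) + 1) ≠ 0 := Nat.cast_add_one_ne_zero n
    have h1 : G (n + 1) = ∑ d ∈ (n + 1).divisors,
        ((((n + 1) / d).totient : ℕ) : ℂ) * ((y : ℂ)) ^ d := by
      rw [hG, ArithmeticFunction.mul_apply,
        Nat.sum_divisorsAntidiagonal' (f := fun a b => T a * cA y b)]
      refine Finset.sum_congr rfl fun d hd => ?_
      have hd0 : d ≠ 0 := (Nat.pos_of_mem_divisors hd).ne'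
      simp [T, cA, hd0]
    rw [h1]
    unfold Nk
    push_cast
    rw [← mul_assoc, mul_one_div_cancel hne, one_mul]
    refine Finset.sum_congr rfl fun d hd => ?_
    rw [hy]
    push_cast
    ring
  -- translating LSeries to the statement's tsums
  have hLF : LSeries (↗F) s
      = ∑' n : ℕ, (((n + 1 : ℕ) : ℂ) * ((Lk k x (n + 1) : ℝ) : ℂ)) / ((n + 1 : ℕ) : ℂ) ^ s := by
    rw [LSeries, Summable.tsum_eq_zero_add hsumF, LSeries.term_zero, zero_add]
    refine tsum_congr fun n => ?_
    rw [LSeries.term_of_ne_zero (Nat.succ_ne_zero n), hFval n]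
  have hsumG : LSeriesSummable (↗G) s := by
    rw [hGAF, ← ArithmeticFunction.coe_mul]
    exact hsumA.convolution hsumF
  have hLG : LSeries (↗G) s
      = ∑' n : ℕ, (((n + 1 : ℕ) : ℂ) * ((Nk k x (n + 1) : ℝ) : ℂ)) / ((n + 1 : ℕ) : ℂ) ^ s := by
    rw [LSeries, Summable.tsum_eq_zero_add hsumG, LSeries.term_zero, zero_add]
    refine tsum_congr fun n => ?_
    rw [LSeries.term_of_ne_zero (Nat.succ_ne_zero n), hGval n]
  rw [← hLF, ← hLG, ← hA_eq, hGAF]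
  exact (ArithmeticFunction.LSeries_mul' hsumA hsumF).symm
end

section
/- Let k be a positive integer and x a real number with |kx| < 1. Then Σ_{n=1}^∞ n · L_k(n) · x^n/(1 − x^n) = kx/(1 − kx), where the series on the left converges absolutely. (Note that |kx| < 1 and k ≥ 1 imply |x| < 1, so each denominator 1 − x^n is nonzero.) -/
open scoped BigOperators

/-- The number of Lyndon words of length `n` over a `k`-letter alphabet,
`L_k(n) = (1/n) * ∑_{d ∣ n} μ(n/d) k^d`, as a real number. -/
noncomputable def LkNum (k : ℕ) (n : ℕ) : ℝ :=
  (1 / (n : ℝ)) * ∑ d ∈ n.divisors, ((ArithmeticFunction.moebius (n / d) : ℤ) : ℝ) * (k : ℝ) ^ d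

/-- auxiliary: `n * LkNum k n` as a sum. -/
noncomputable def aFun (k : ℕ) (n : ℕ) : ℝ :=
  ∑ d ∈ n.divisors, ((ArithmeticFunction.moebius (n / d) : ℤ) : ℝ) * (k : ℝ) ^ d

lemma aFun_zero (k : ℕ) : aFun k 0 = 0 := by simp [aFun]

lemma mul_LkNum (k : ℕ) {n : ℕ} (hn : n ≠ 0) : (n : ℝ) * LkNum k n = aFun k n := by
  have : (n : ℝ) ≠ 0 := Nat.cast_ne_zero.mpr hn
  rw [LkNum, aFun, ← mul_assoc, mul_one_div, div_self this, one_mul]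

lemma sum_aFun (k : ℕ) {n : ℕ} (hn : 0 < n) :
    ∑ d ∈ n.divisors, aFun k d = (k : ℝ) ^ n := by
  refine (ArithmeticFunction.sum_eq_iff_sum_mul_moebius_eq
    (f := aFun k) (g := fun n => (k : ℝ) ^ n)).mpr ?_ n hn
  intro m hm
  rw [aFun, ← Nat.sum_divisorsAntidiagonal' (f := fun a b => ((ArithmeticFunction.moebius a : ℤ) : ℝ) * (k:ℝ) ^ b)]

lemma aFun_abs_le (k : ℕ) (hk : 0 < k) (n : ℕ) : |aFun k n| ≤ (n : ℝ) * (k : ℝ) ^ n := by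
  calc |aFun k n| ≤ ∑ d ∈ n.divisors, |((ArithmeticFunction.moebius (n / d) : ℤ) : ℝ) * (k : ℝ) ^ d| :=
        Finset.abs_sum_le_sum_abs _ _
    _ ≤ ∑ d ∈ n.divisors, (k : ℝ) ^ n := by
        refine Finset.sum_le_sum fun d hd => ?_
        rw [abs_mul]
        have h1 : |((ArithmeticFunction.moebius (n / d) : ℤ) : ℝ)| ≤ 1 := by
          have := ArithmeticFunction.abs_moebius_le_one (n := n / d)
          exact_mod_cast (by exact_mod_cast this : (|(ArithmeticFunction.moebius (n/d) : ℤ)| : ℝ) ≤ 1)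
        have h2 : |(k : ℝ) ^ d| ≤ (k : ℝ) ^ n := by
          rw [abs_pow, Nat.abs_cast]
          exact pow_le_pow_right₀ (by exact_mod_cast hk) (Nat.divisor_le hd)
        calc |((ArithmeticFunction.moebius (n / d) : ℤ) : ℝ)| * |(k : ℝ) ^ d|
            ≤ 1 * ((k:ℝ) ^ n) := mul_le_mul h1 h2 (abs_nonneg _) zero_le_one
          _ = (k : ℝ) ^ n := one_mul _
    _ ≤ (n : ℝ) * (k : ℝ) ^ n := by
        rw [Finset.sum_const, nsmul_eq_mul]
        have hsub : n.divisors ⊆ Finset.Icc 1 n := fun d hd =>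
          Finset.mem_Icc.mpr ⟨Nat.pos_of_mem_divisors hd, Nat.divisor_le hd⟩
        have hcard : (n.divisors.card : ℝ) ≤ (n : ℝ) := by
          have := Finset.card_le_card hsub
          rw [Nat.card_Icc] at this
          exact_mod_cast le_trans this (by omega)
        exact mul_le_mul_of_nonneg_right hcard (by positivity)

/-- geometric series with the 0-th term removed -/
lemma hasSum_aux {r : ℝ} (c : ℝ) (hr : |r| < 1) :
    HasSum (fun m : ℕ => if m = 0 then (0:ℝ) else c * r ^ m) (c * (r / (1 - r))) := by
  have h := (hasSum_geometric_of_norm_lt_one (ξ := r) (by rwa [Real.norm_eq_abs])).mul_left (c * r)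
  have h2 : HasSum (fun m : ℕ => if m + 1 = 0 then (0:ℝ) else c * r ^ (m + 1)) (c * r * (1 - r)⁻¹) := by
    refine h.congr_fun fun m => ?_
    simp [pow_succ, mul_comm, mul_assoc, mul_left_comm]
  have h3 := (hasSum_nat_add_iff (f := fun m : ℕ => if m = 0 then (0:ℝ) else c * r ^ m) 1).mp h2
  simpa [div_eq_mul_inv, mul_assoc] using h3

theorem stmt14 (k : ℕ) (hk : 0 < k) (x : ℝ) (hx : |(k : ℝ) * x| < 1) :
    Summable (fun n : ℕ =>
      |((n + 1 : ℕ) : ℝ) * LkNum k (n + 1) * (x ^ (n + 1) / (1 - x ^ (n + 1)))|) ∧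
    ∑' n : ℕ, ((n + 1 : ℕ) : ℝ) * LkNum k (n + 1) * (x ^ (n + 1) / (1 - x ^ (n + 1)))
      = (k : ℝ) * x / (1 - (k : ℝ) * x) := by
  have hk1 : (1:ℝ) ≤ (k:ℝ) := by exact_mod_cast hk
  have hx1 : |x| < 1 := by
    calc |x| = 1 * |x| := (one_mul _).symm
      _ ≤ (k:ℝ) * |x| := mul_le_mul_of_nonneg_right hk1 (abs_nonneg x)
      _ = |(k:ℝ) * x| := by rw [abs_mul, Nat.abs_cast]
      _ < 1 := hx
  have hx0 : (0:ℝ) < 1 - |x| := by linarith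
  have hxn : ∀ n : ℕ, n ≠ 0 → |x| ^ n < 1 := fun n hn => pow_lt_one₀ (abs_nonneg x) hx1 hn
  have hxn0 : ∀ n : ℕ, n ≠ 0 → (0:ℝ) < 1 - |x| ^ n := fun n hn => by
    have := hxn n hn; linarith
  set F : ℕ × ℕ → ℝ :=
    fun p => if p.1 = 0 ∨ p.2 = 0 then 0 else aFun k p.1 * x ^ (p.1 * p.2) with hF_def
  set R : ℕ → ℝ := fun n => |aFun k n| * (|x| ^ n / (1 - |x| ^ n)) with hR_def
  -- absolute row sums
  have habsRow : ∀ n : ℕ, HasSum (fun m => |F (n, m)|) (R n) := by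
    intro n
    rcases eq_or_ne n 0 with rfl | hn
    · have h0 : (fun m : ℕ => |F (0, m)|) = fun _ => (0:ℝ) := by
        funext m; simp [hF_def]
      rw [h0, hR_def]
      simpa [aFun_zero] using (hasSum_zero : HasSum (fun _ : ℕ => (0:ℝ)) 0)
    · have hr : |(|x| ^ n)| < 1 := by
        rw [abs_of_nonneg (by positivity)]; exact hxn n hn
      exact (hasSum_aux (|aFun k n|) hr).congr_fun fun m => by
        rcases eq_or_ne m 0 with rfl | hm
        · simp [hF_def]
        · simp only [hF_def, hn, hm, or_self, if_false]
          rw [abs_mul, abs_pow, pow_mul]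
  -- summability of R
  have hRnn : ∀ n, 0 ≤ R n := fun n => (habsRow n).nonneg fun m => abs_nonneg _
  have hRle : ∀ n : ℕ, R n ≤ ((n:ℝ) ^ 1 * ((k:ℝ) * |x|) ^ n) * (1 / (1 - |x|)) := by
    intro n
    rcases eq_or_ne n 0 with rfl | hn
    · simp [hR_def, aFun_zero]
    · have h1 : |aFun k n| ≤ (n : ℝ) * (k:ℝ) ^ n := aFun_abs_le k hk n
      have h2 : |x| ^ n / (1 - |x| ^ n) ≤ |x| ^ n / (1 - |x|) := by
        have hle : |x| ^ n ≤ |x| := by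
          calc |x| ^ n ≤ |x| ^ 1 := pow_le_pow_of_le_one (abs_nonneg x) hx1.le (Nat.one_le_iff_ne_zero.mpr hn)
            _ = |x| := pow_one _
        exact div_le_div_of_nonneg_left (by positivity) hx0 (by linarith)
      calc R n ≤ ((n:ℝ) * (k:ℝ) ^ n) * (|x| ^ n / (1 - |x|)) := by
            exact mul_le_mul h1 h2 (div_nonneg (by positivity) (hxn0 n hn).le) (by positivity)
        _ = ((n:ℝ) ^ 1 * ((k:ℝ) * |x|) ^ n) * (1 / (1 - |x|)) := by
            rw [mul_pow, pow_one]; ring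
  have hkx' : ‖(k:ℝ) * |x|‖ < 1 := by
    rw [Real.norm_eq_abs, abs_of_nonneg (by positivity)]
    calc (k:ℝ) * |x| = |(k:ℝ) * x| := by rw [abs_mul, Nat.abs_cast]
      _ < 1 := hx
  have hRsum : Summable R := by
    refine Summable.of_nonneg_of_le hRnn hRle ?_
    exact (summable_pow_mul_geometric_of_norm_lt_one 1 hkx').mul_right _
  -- summability of |F| and F
  have hFabs : Summable (fun p => |F p|) := by
    refine (summable_prod_of_nonneg (fun p => abs_nonneg _)).mpr ⟨fun n => (habsRow n).summable, ?_⟩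
    have : (fun n => ∑' m, |F (n, m)|) = R := funext fun n => (habsRow n).tsum_eq
    rw [this]; exact hRsum
  have hF : Summable F := hFabs.of_abs
  set S : ℝ := ∑' p, F p with hS_def
  have hS : HasSum F S := hF.hasSum
  -- fiberwise sums over N = p.1 * p.2
  have hfib : ∀ N : ℕ, (∑' b : ((fun p : ℕ × ℕ => p.1 * p.2) ⁻¹' {N}), F b.val)
      = (if N = 0 then 0 else ((k:ℝ) * x) ^ N) := by
    intro N
    rcases eq_or_ne N 0 with rfl | hN
    · rw [if_pos rfl]
      have : ∀ b : ((fun p : ℕ × ℕ => p.1 * p.2) ⁻¹' {(0:ℕ)}), F b.val = 0 := by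
        rintro ⟨⟨p₁, p₂⟩, hp⟩
        have : p₁ * p₂ = 0 := hp
        rcases Nat.mul_eq_zero.mp this with rfl | rfl <;> simp [hF_def]
      simp only [this, tsum_zero]
    · rw [if_neg hN,
        show (fun p : ℕ × ℕ => p.1 * p.2) ⁻¹' {N} = ↑(N.divisorsAntidiagonal) by
          ext p; simp [Nat.mem_divisorsAntidiagonal, hN],
        Finset.tsum_subtype' N.divisorsAntidiagonal F]
      have hstep : ∑ p ∈ N.divisorsAntidiagonal, F p
          = ∑ p ∈ N.divisorsAntidiagonal, aFun k p.1 * x ^ N := by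
        refine Finset.sum_congr rfl fun p hp => ?_
        obtain ⟨h1, h2⟩ := Nat.ne_zero_of_mem_divisorsAntidiagonal hp
        have hmul : p.1 * p.2 = N := (Nat.mem_divisorsAntidiagonal.mp hp).1
        simp only [hF_def, h1, h2, or_self, if_false, hmul]
      rw [hstep, ← Finset.sum_mul,
        Nat.sum_divisorsAntidiagonal (f := fun d _ => aFun k d),
        sum_aFun k (Nat.pos_of_ne_zero hN), ← mul_pow]
  have hFib : HasSum (fun N : ℕ => if N = 0 then 0 else ((k:ℝ) * x) ^ N) S := by
    have h := hS.tsum_fiberwise (fun p => p.1 * p.2)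
    exact h.congr_fun fun N => (hfib N).symm
  have hgeo : HasSum (fun N : ℕ => if N = 0 then 0 else ((k:ℝ) * x) ^ N)
      ((k:ℝ) * x / (1 - (k:ℝ) * x)) := by
    have := hasSum_aux (r := (k:ℝ) * x) 1 hx
    simpa using this
  have hSval : S = (k:ℝ) * x / (1 - (k:ℝ) * x) := hFib.unique hgeo
  -- signed row sums
  have hrow : ∀ n : ℕ, HasSum (fun m => F (n, m)) (aFun k n * (x ^ n / (1 - x ^ n))) := by
    intro n
    rcases eq_or_ne n 0 with rfl | hn
    · have h0 : (fun m : ℕ => F (0, m)) = fun _ => (0:ℝ) := by funext m; simp [hF_def]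
      rw [h0, aFun_zero, zero_mul]
      exact hasSum_zero
    · have hr : |x ^ n| < 1 := by rw [abs_pow]; exact hxn n hn
      exact (hasSum_aux (aFun k n) hr).congr_fun fun m => by
        rcases eq_or_ne m 0 with rfl | hm
        · simp [hF_def]
        · simp only [hF_def, hn, hm, or_self, if_false]
          rw [pow_mul]
  have hG : HasSum (fun n => aFun k n * (x ^ n / (1 - x ^ n))) S := hS.prod_fiberwise hrow
  have hG1 : HasSum (fun n : ℕ => aFun k (n + 1) * (x ^ (n + 1) / (1 - x ^ (n + 1)))) S := by
    refine (hasSum_nat_add_iff (f := fun n => aFun k n * (x ^ n / (1 - x ^ n))) 1).mpr ?_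
    simpa [aFun_zero] using hG
  -- identify statement terms
  have hterm : ∀ n : ℕ, ((n + 1 : ℕ) : ℝ) * LkNum k (n + 1) * (x ^ (n + 1) / (1 - x ^ (n + 1)))
      = aFun k (n + 1) * (x ^ (n + 1) / (1 - x ^ (n + 1))) := fun n => by
    rw [mul_LkNum k (Nat.succ_ne_zero n)]
  constructor
  · -- summability of absolute values
    refine Summable.of_nonneg_of_le (fun n => abs_nonneg _) (fun n => ?_)
      ((summable_nat_add_iff 1).mpr hRsum)
    rw [hterm n, abs_mul]
    have hd : |x ^ (n+1) / (1 - x ^ (n+1))| ≤ |x| ^ (n+1) / (1 - |x| ^ (n+1)) := by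
      rw [abs_div, abs_pow]
      refine div_le_div_of_nonneg_left (by positivity) (hxn0 (n+1) (Nat.succ_ne_zero n)) ?_
      calc 1 - |x| ^ (n+1) = |(1:ℝ)| - |x ^ (n+1)| := by rw [abs_one, abs_pow]
        _ ≤ |1 - x ^ (n+1)| := abs_sub_abs_le_abs_sub 1 (x ^ (n+1))
    calc |aFun k (n+1)| * |x ^ (n+1) / (1 - x ^ (n+1))|
        ≤ |aFun k (n+1)| * (|x| ^ (n+1) / (1 - |x| ^ (n+1))) :=
          mul_le_mul_of_nonneg_left hd (abs_nonneg _)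
      _ = R (n+1) := rfl
  · rw [← hSval, ← hG1.tsum_eq]
    exact tsum_congr hterm
end

section
/- Let m be a nonnegative integer and λ a complex number with λ ≠ 1. Define the Apostol–Bernoulli number 𝓑_{m+1}(λ) as the (m+1)-st iterated derivative at t = 0 of the function t ↦ t/(λe^t − 1) (which is analytic in a neighborhood of 0 since λ ≠ 1, taking the value 0 at t = 0). Then 𝓑_{m+1}(λ) = −((m+1)/(1 − λ)^{m+1}) · Σ_{j=0}^{m} A(m,j) · λ^{m−j}, where A(m,j) denotes the Eulerian number, i.e., the number of permutations σ of {1, 2, …, m} having exactly j descents (positions i with 1 ≤ i ≤ m−1 and σ(i) > σ(i+1)). -/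
open scoped BigOperators

/-- The number of descents of a permutation `σ` of `Fin m`, i.e. the number of
positions `i` with `i + 1 < m` and `σ i > σ (i + 1)`. -/
def descentCount (m : ℕ) (σ : Equiv.Perm (Fin m)) : ℕ :=
  (Finset.univ.filter (fun i : Fin (m - 1) =>
    σ ⟨i.1 + 1, by have := i.isLt; omega⟩ < σ ⟨i.1, by have := i.isLt; omega⟩)).card

/-- The Eulerian number `A(m, j)`: the number of permutations of `{1, …, m}`
with exactly `j` descents. -/
def eulerianNumber (m j : ℕ) : ℕ :=
  (Finset.univ.filter (fun σ : Equiv.Perm (Fin m) => descentCount m σ = j)).card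

/-- The Apostol–Bernoulli number `𝓑_n(λ)`, defined as the `n`-th iterated
derivative at `0` of `t ↦ t / (λ e^t - 1)`. -/
noncomputable def apostolBernoulli (n : ℕ) (l : ℂ) : ℂ :=
  iteratedDeriv n (fun t : ℂ => t / (l * Complex.exp t - 1)) 0

open Equiv

def abW (m : ℕ) (σ : Equiv.Perm (Fin m)) : ℕ → ℕ := fun i =>
  if h : i < m then (σ ⟨i, h⟩).1 else m + i
lemma abW_of_lt {m : ℕ} (σ : Equiv.Perm (Fin m)) {i : ℕ} (h : i < m) :
    abW m σ i = (σ ⟨i, h⟩).1 := by simp only [abW, dif_pos h]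
lemma finFilterCard (n : ℕ) (p : ℕ → Prop) [DecidablePred p] :
    (Finset.univ.filter (fun i : Fin n => p i.1)).card
      = ((Finset.range n).filter p).card := by
  apply Finset.card_bij (fun i _ => i.1)
  · intro a ha
    simp only [Finset.mem_filter, Finset.mem_range, Finset.mem_univ, true_and] at ha ⊢
    exact ⟨a.isLt, ha⟩
  · intro a _ b _ h; exact Fin.ext h
  · intro b hb
    simp only [Finset.mem_filter, Finset.mem_range] at hb
    exact ⟨⟨b, hb.1⟩, by simp [hb.2], rfl⟩
lemma descentCount_eq (m : ℕ) (σ : Equiv.Perm (Fin m)) :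
    descentCount m σ
      = ((Finset.range (m - 1)).filter (fun i => abW m σ (i + 1) < abW m σ i)).card := by
  rw [descentCount, ← finFilterCard]
  congr 1
  apply Finset.filter_congr
  intro i _
  have h1 : i.1 + 1 < m := by have := i.isLt; omega
  have h2 : i.1 < m := by omega
  rw [abW_of_lt σ h1, abW_of_lt σ h2]
  exact Iff.rfl

lemma abW_lt {m : ℕ} (σ : Equiv.Perm (Fin m)) {i : ℕ} (h : i < m) : abW m σ i < m := by
  simp only [abW, dif_pos h]
  exact (σ ⟨i, h⟩).isLt

lemma descentCount_le (m : ℕ) (σ : Equiv.Perm (Fin m)) : descentCount m σ ≤ m - 1 := by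
  rw [descentCount_eq]
  calc _ ≤ (Finset.range (m-1)).card := Finset.card_filter_le _ _
  _ = m - 1 := Finset.card_range _

def abD (m : ℕ) (σ : Equiv.Perm (Fin m)) : Finset ℕ :=
  (Finset.range (m - 1)).filter (fun i => abW m σ (i + 1) < abW m σ i)

lemma descentCount_eq' (m : ℕ) (σ : Equiv.Perm (Fin m)) :
    descentCount m σ = (abD m σ).card := descentCount_eq m σ

variable {m : ℕ}

def abIns (m : ℕ) (σ : Equiv.Perm (Fin m)) (k : Fin (m + 1)) : Equiv.Perm (Fin (m + 1)) :=
  ((finSuccEquiv' k).trans (Equiv.optionCongr σ)).trans (finSuccEquiv' (Fin.last m)).symm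

lemma abIns_at (σ : Equiv.Perm (Fin m)) (k : Fin (m + 1)) : abIns m σ k k = Fin.last m := by
  simp [abIns, finSuccEquiv'_at, finSuccEquiv'_symm_none]

lemma abIns_succAbove (σ : Equiv.Perm (Fin m)) (k : Fin (m + 1)) (j : Fin m) :
    abIns m σ k (k.succAbove j) = (σ j).castSucc := by
  simp [abIns, finSuccEquiv'_succAbove, finSuccEquiv'_symm_some, Fin.succAbove_last]

lemma abIns_val_lt (σ : Equiv.Perm (Fin m)) (k : Fin (m + 1)) {p : Fin (m+1)} (h : p.1 < k.1) :
    (abIns m σ k p).1 = (σ ⟨p.1, by omega⟩).1 := by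
  have hp : p.1 < m := by have := k.isLt; omega
  have : p = k.succAbove ⟨p.1, hp⟩ := by
    rw [Fin.succAbove_of_castSucc_lt]
    · rfl
    · exact h
  conv_lhs => rw [this, abIns_succAbove]
  rfl

lemma abIns_val_gt (σ : Equiv.Perm (Fin m)) (k : Fin (m + 1)) {p : Fin (m+1)} (h : k.1 < p.1) :
    (abIns m σ k p).1 = (σ ⟨p.1 - 1, by have := p.isLt; omega⟩).1 := by
  have hp : p.1 - 1 < m := by have := p.isLt; omega
  have : p = k.succAbove ⟨p.1 - 1, hp⟩ := by
    rw [Fin.succAbove_of_le_castSucc]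
    · ext; simp [Fin.succ]; omega
    · simp [Fin.le_def]; omega
  conv_lhs => rw [this, abIns_succAbove]
  rfl

lemma abIns_inj : Function.Injective
    (fun p : Equiv.Perm (Fin m) × Fin (m + 1) => abIns m p.1 p.2) := by
  rintro ⟨σ, k⟩ ⟨σ', k'⟩ h
  simp only at h
  have hk : k = k' := by
    have h1 : abIns m σ' k' k = Fin.last m := by rw [← h, abIns_at]
    have h2 : abIns m σ' k' k' = Fin.last m := abIns_at σ' k'
    exact (abIns m σ' k').injective (h1.trans h2.symm)
  subst hk
  have hσ : σ = σ' := by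
    apply Equiv.ext; intro j
    have := congrArg (fun τ => τ (k.succAbove j)) h
    simp only [abIns_succAbove] at this
    exact Fin.castSucc_injective m this
  rw [hσ]

lemma abIns_bij : Function.Bijective
    (fun p : Equiv.Perm (Fin m) × Fin (m + 1) => abIns m p.1 p.2) := by
  rw [Fintype.bijective_iff_injective_and_card]
  refine ⟨abIns_inj, ?_⟩
  simp [Fintype.card_perm, Nat.factorial_succ, Nat.mul_comm]

-- word of inserted permutation
lemma abW_abIns (σ : Equiv.Perm (Fin m)) (k : Fin (m+1)) {p : ℕ} (hp : p < m + 1) :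
    abW (m+1) (abIns m σ k) p
      = if p = k.1 then m else if p < k.1 then abW m σ p else abW m σ (p - 1) := by
  rw [abW_of_lt _ hp]
  rcases Nat.lt_trichotomy p k.1 with h | h | h
  · rw [if_neg (by omega), if_pos h, abIns_val_lt σ k (p := ⟨p, hp⟩) h,
      abW_of_lt σ (by have := k.isLt; omega)]
  · have : (⟨p, hp⟩ : Fin (m+1)) = k := Fin.ext h
    rw [this, abIns_at, if_pos h]
    rfl
  · rw [if_neg (by omega), if_neg (by omega), abIns_val_gt σ k (p := ⟨p, hp⟩) h,
      abW_of_lt σ (by omega)]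

lemma mem_abD {σ : Equiv.Perm (Fin m)} {j : ℕ} :
    j ∈ abD m σ ↔ j < m - 1 ∧ abW m σ (j+1) < abW m σ j := by
  simp [abD, Finset.mem_filter, Finset.mem_range]

lemma descentCount_abIns (σ : Equiv.Perm (Fin m)) (k : Fin (m+1)) :
    descentCount (m+1) (abIns m σ k)
      = if k.1 = m ∨ (0 < k.1 ∧ k.1 - 1 ∈ abD m σ)
        then descentCount m σ else descentCount m σ + 1 := by
  have hk := k.isLt
  rw [descentCount_eq', descentCount_eq']
  have hDτ : abD (m+1) (abIns m σ k)
      = ((abD m σ).filter (fun j => j + 1 < k.1))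
        ∪ ((abD m σ).filter (fun j => k.1 ≤ j)).image (· + 1)
        ∪ (if k.1 < m then ({k.1} : Finset ℕ) else ∅) := by
    ext i
    simp only [Finset.mem_union, Finset.mem_filter, Finset.mem_image, mem_abD]
    constructor
    · intro hi
      obtain ⟨hi1, hi2⟩ := hi
      have hi1' : i < m := by omega
      rw [abW_abIns σ k (show i + 1 < m + 1 by omega),
        abW_abIns σ k (show i < m + 1 by omega)] at hi2
      simp only [Nat.add_sub_cancel] at hi2
      rcases Nat.lt_trichotomy i k.1 with h | h | h
      · by_cases h2 : i + 1 = k.1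
        · rw [if_pos h2, if_neg (show ¬ i = k.1 by omega), if_pos h] at hi2
          have := abW_lt σ hi1'
          omega
        · rw [if_neg h2, if_pos (show i + 1 < k.1 by omega),
            if_neg (show ¬ i = k.1 by omega), if_pos h] at hi2
          exact Or.inl (Or.inl ⟨⟨by omega, hi2⟩, by omega⟩)
      · right
        rw [if_pos (show k.1 < m by omega)]
        simp [h]
      · rw [if_neg (show ¬ i + 1 = k.1 by omega), if_neg (show ¬ i + 1 < k.1 by omega),
          if_neg (show ¬ i = k.1 by omega), if_neg (show ¬ i < k.1 by omega)] at hi2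
        refine Or.inl (Or.inr ⟨i - 1, ⟨⟨by omega, ?_⟩, by omega⟩, by omega⟩)
        rwa [show i - 1 + 1 = i by omega]
    · intro hi
      rcases hi with (⟨⟨hj1, hj2⟩, hj3⟩ | ⟨j, ⟨⟨hj1, hj2⟩, hj3⟩, hj4⟩) | hi
      · refine ⟨by omega, ?_⟩
        rw [abW_abIns σ k (show i + 1 < m + 1 by omega),
          abW_abIns σ k (show i < m + 1 by omega),
          if_neg (show ¬ i + 1 = k.1 by omega), if_pos (show i + 1 < k.1 by omega),
          if_neg (show ¬ i = k.1 by omega), if_pos (show i < k.1 by omega)]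
        exact hj2
      · subst hj4
        refine ⟨by omega, ?_⟩
        rw [abW_abIns σ k (show j + 1 + 1 < m + 1 by omega),
          abW_abIns σ k (show j + 1 < m + 1 by omega),
          if_neg (show ¬ j + 1 + 1 = k.1 by omega), if_neg (show ¬ j + 1 + 1 < k.1 by omega),
          if_neg (show ¬ j + 1 = k.1 by omega), if_neg (show ¬ j + 1 < k.1 by omega)]
        simp only [Nat.add_sub_cancel]
        exact hj2
      · by_cases hkm : k.1 < m
        · rw [if_pos hkm, Finset.mem_singleton] at hi
          subst hi
          refine ⟨by omega, ?_⟩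
          rw [abW_abIns σ k (show k.1 + 1 < m + 1 by omega),
            abW_abIns σ k (show k.1 < m + 1 by omega),
            if_neg (show ¬ k.1 + 1 = k.1 by omega), if_neg (show ¬ k.1 + 1 < k.1 by omega),
            if_pos rfl]
          simp only [Nat.add_sub_cancel]
          exact abW_lt σ hkm
        · rw [if_neg hkm] at hi
          exact absurd hi (Finset.notMem_empty i)
  rw [hDτ]
  have hd1 : Disjoint ((abD m σ).filter (fun j => j + 1 < k.1))
      (((abD m σ).filter (fun j => k.1 ≤ j)).image (· + 1)) := by
    rw [Finset.disjoint_left]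
    intro a ha hb
    simp only [Finset.mem_filter, Finset.mem_image] at ha hb
    obtain ⟨j, hj, hj2⟩ := hb
    omega
  have hd2 : Disjoint (((abD m σ).filter (fun j => j + 1 < k.1))
      ∪ ((abD m σ).filter (fun j => k.1 ≤ j)).image (· + 1))
      (if k.1 < m then ({k.1} : Finset ℕ) else ∅) := by
    rw [Finset.disjoint_right]
    intro a ha hb
    by_cases hkm : k.1 < m
    · rw [if_pos hkm, Finset.mem_singleton] at ha
      subst ha
      simp only [Finset.mem_union, Finset.mem_filter, Finset.mem_image] at hb
      rcases hb with ⟨_, h⟩ | ⟨j, ⟨_, hj2⟩, hj3⟩ <;> omega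
    · rw [if_neg hkm] at ha; simp at ha
  rw [Finset.card_union_of_disjoint hd2, Finset.card_union_of_disjoint hd1,
    Finset.card_image_of_injective _ (add_left_injective 1)]
  -- partition abD by comparison with k
  have hpart : (abD m σ).card
      = ((abD m σ).filter (fun j => j + 1 < k.1)).card
        + ((abD m σ).filter (fun j => j + 1 = k.1)).card
        + ((abD m σ).filter (fun j => k.1 ≤ j)).card := by
    have hu : ((abD m σ).filter (fun j => j + 1 < k.1))
        ∪ (((abD m σ).filter (fun j => j + 1 = k.1)) ∪ ((abD m σ).filter (fun j => k.1 ≤ j)))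
        = abD m σ := by
      ext j
      simp only [Finset.mem_union, Finset.mem_filter]
      by_cases h : j ∈ abD m σ <;> simp [h] <;> omega
    have d1 : Disjoint ((abD m σ).filter (fun j => j + 1 = k.1))
        ((abD m σ).filter (fun j => k.1 ≤ j)) := by
      rw [Finset.disjoint_left]
      intro a ha hb
      simp only [Finset.mem_filter] at ha hb
      omega
    have d2 : Disjoint ((abD m σ).filter (fun j => j + 1 < k.1))
        (((abD m σ).filter (fun j => j + 1 = k.1)) ∪ ((abD m σ).filter (fun j => k.1 ≤ j))) := by
      rw [Finset.disjoint_left]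
      intro a ha hb
      simp only [Finset.mem_union, Finset.mem_filter] at ha hb
      rcases hb with hb | hb <;> omega
    conv_lhs => rw [← hu]
    rw [Finset.card_union_of_disjoint d2, Finset.card_union_of_disjoint d1]
    omega
  have hE : ((abD m σ).filter (fun j => j + 1 = k.1)).card
      = if 0 < k.1 ∧ k.1 - 1 ∈ abD m σ then 1 else 0 := by
    by_cases h : 0 < k.1 ∧ k.1 - 1 ∈ abD m σ
    · rw [if_pos h]
      have : (abD m σ).filter (fun j => j + 1 = k.1) = {k.1 - 1} := by
        ext j
        simp only [Finset.mem_filter, Finset.mem_singleton]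
        constructor
        · intro ⟨_, h2⟩; omega
        · intro hj; subst hj; exact ⟨h.2, by omega⟩
      rw [this, Finset.card_singleton]
    · rw [if_neg h]
      rw [Finset.card_eq_zero, Finset.filter_eq_empty_iff]
      intro j hj hj2
      apply h
      constructor
      · omega
      · have : k.1 - 1 = j := by omega
        rw [this]; exact hj
  by_cases hg : k.1 = m ∨ (0 < k.1 ∧ k.1 - 1 ∈ abD m σ)
  · rw [if_pos hg]
    rcases hg with hg | hg
    · -- k = m : B and E and C are all empty/zero, A = abD
      have hC : (if k.1 < m then ({k.1} : Finset ℕ) else ∅) = ∅ := by rw [if_neg (by omega)]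
      have hA : (abD m σ).filter (fun j => j + 1 < k.1) = abD m σ := by
        apply Finset.filter_true_of_mem
        intro j hj
        rw [mem_abD] at hj
        omega
      have hB : (abD m σ).filter (fun j => k.1 ≤ j) = ∅ := by
        rw [Finset.filter_eq_empty_iff]
        intro j hj
        rw [mem_abD] at hj
        omega
      rw [hC, hA, hB]
      simp
    · have hkm : k.1 < m := by
        have := (mem_abD.mp hg.2).1
        omega
      rw [if_pos hkm, Finset.card_singleton, hpart, hE, if_pos hg]
      omega
  · rw [if_neg hg]
    push_neg at hg
    have hkm : k.1 < m := by omega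
    rw [if_pos hkm, Finset.card_singleton, hpart, hE,
      if_neg (by push_neg; intro h; exact (hg.2 h))]
    omega

lemma goodCard (σ : Equiv.Perm (Fin m)) :
    (Finset.univ.filter (fun k : Fin (m+1) =>
      k.1 = m ∨ (0 < k.1 ∧ k.1 - 1 ∈ abD m σ))).card = descentCount m σ + 1 := by
  rw [finFilterCard (m+1) (fun i => i = m ∨ (0 < i ∧ i - 1 ∈ abD m σ))]
  have : (Finset.range (m+1)).filter (fun i => i = m ∨ (0 < i ∧ i - 1 ∈ abD m σ))
      = insert m ((abD m σ).image (· + 1)) := by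
    ext i
    simp only [Finset.mem_filter, Finset.mem_range, Finset.mem_insert, Finset.mem_image]
    constructor
    · rintro ⟨hi, hi2 | ⟨hi2, hi3⟩⟩
      · exact Or.inl hi2
      · exact Or.inr ⟨i - 1, hi3, by omega⟩
    · rintro (h | ⟨j, hj, hj2⟩)
      · exact ⟨by omega, Or.inl h⟩
      · have := (mem_abD.mp hj).1
        refine ⟨by omega, Or.inr ⟨by omega, ?_⟩⟩
        have : i - 1 = j := by omega
        rw [this]; exact hj
  have hnm : m ∉ (abD m σ).image (· + 1) := by
    simp only [Finset.mem_image]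
    rintro ⟨j, hj, hj2⟩
    have := (mem_abD.mp hj).1
    omega
  rw [this, Finset.card_insert_of_notMem hnm,
    Finset.card_image_of_injective _ (add_left_injective 1), descentCount_eq']

lemma abKey (m : ℕ) (F : ℕ → ℂ) :
    ∑ τ : Equiv.Perm (Fin (m+1)), F (descentCount (m+1) τ)
      = ∑ σ : Equiv.Perm (Fin m),
          (((descentCount m σ : ℂ) + 1) * F (descentCount m σ)
            + ((m : ℂ) - descentCount m σ) * F (descentCount m σ + 1)) := by
  rw [← Fintype.sum_bijective (fun p : Equiv.Perm (Fin m) × Fin (m + 1) => abIns m p.1 p.2)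
    abIns_bij (fun p => F (descentCount (m+1) (abIns m p.1 p.2)))
    (fun τ => F (descentCount (m+1) τ)) (fun p => rfl)]
  rw [Fintype.sum_prod_type]
  apply Finset.sum_congr rfl
  intro σ _
  have hle : descentCount m σ ≤ m := le_trans (descentCount_le m σ) (Nat.sub_le m 1)
  calc ∑ k : Fin (m+1), F (descentCount (m+1) (abIns m σ k))
      = ∑ k : Fin (m+1), (if k.1 = m ∨ (0 < k.1 ∧ k.1 - 1 ∈ abD m σ)
          then F (descentCount m σ) else F (descentCount m σ + 1)) := by
        apply Finset.sum_congr rfl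
        intro k _
        rw [descentCount_abIns σ k]
        split_ifs <;> rfl
    _ = (descentCount m σ + 1) • F (descentCount m σ)
          + (m - descentCount m σ) • F (descentCount m σ + 1) := by
        rw [Finset.sum_ite, Finset.sum_const, Finset.sum_const, goodCard σ]
        congr 2
        have := Finset.card_filter_add_card_filter_not
          (s := (Finset.univ : Finset (Fin (m+1))))
          (p := fun k : Fin (m+1) => k.1 = m ∨ (0 < k.1 ∧ k.1 - 1 ∈ abD m σ))
        rw [goodCard σ] at this
        simp only [Finset.card_univ, Fintype.card_fin] at this
        omega
    _ = _ := by
        rw [nsmul_eq_mul, nsmul_eq_mul]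
        push_cast [hle]
        ring

noncomputable def abG (l : ℂ) (n : ℕ) : ℂ → ℂ := fun t =>
  ∑ σ : Equiv.Perm (Fin n),
    -((l * Complex.exp t) ^ (n - descentCount n σ) * ((1 - l * Complex.exp t) ^ (n + 1))⁻¹)

lemma abAlg (x : ℂ) (h1x : 1 - x ≠ 0) (n d : ℕ) (hle : d ≤ n) :
    ((d : ℂ) + 1) * (-(x ^ (n + 1 - d) * ((1 - x) ^ (n + 2))⁻¹))
      + ((n : ℂ) - (d : ℂ)) * (-(x ^ (n + 1 - (d + 1)) * ((1 - x) ^ (n + 2))⁻¹))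
    = -( (((n - d : ℕ) : ℂ) * x ^ (n - d - 1) * x) * ((1 - x) ^ (n + 1))⁻¹
       + x ^ (n - d) * (-((((n + 1 : ℕ) : ℂ) * (1 - x) ^ (n + 1 - 1)) * (0 - x))
          / ((1 - x) ^ (n + 1)) ^ 2) ) := by
  obtain ⟨a, rfl⟩ : ∃ a, n = d + a := ⟨n - d, by omega⟩
  rw [show d + a + 1 - d = a + 1 by omega, show d + a + 1 - (d + 1) = a by omega,
    show d + a - d = a by omega, show d + a + 1 - 1 = d + a by omega]
  rcases a with _ | b
  · push_cast
    field_simp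
    ring
  · rw [show b + 1 - 1 = b by omega]
    push_cast
    field_simp
    ring

lemma abG_hasDerivAt (l : ℂ) (n : ℕ) {t : ℂ} (ht : l * Complex.exp t ≠ 1) :
    HasDerivAt (abG l n) (abG l (n + 1) t) t := by
  set x := l * Complex.exp t with hx
  have h1x : (1 : ℂ) - x ≠ 0 := sub_ne_zero.mpr (Ne.symm ht)
  have hu : HasDerivAt (fun s => l * Complex.exp s) x t := by
    simpa using (Complex.hasDerivAt_exp t).const_mul l
  have hval : abG l (n + 1) t
      = ∑ σ : Equiv.Perm (Fin n),
          (((descentCount n σ : ℂ) + 1)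
              * (-(x ^ (n + 1 - descentCount n σ) * ((1 - x) ^ (n + 2))⁻¹))
            + ((n : ℂ) - descentCount n σ)
              * (-(x ^ (n + 1 - (descentCount n σ + 1)) * ((1 - x) ^ (n + 2))⁻¹))) := by
    rw [show abG l (n+1) t = ∑ τ : Equiv.Perm (Fin (n+1)),
        (fun c => -(x ^ (n + 1 - c) * ((1 - x) ^ (n + 2))⁻¹)) (descentCount (n+1) τ) from rfl]
    rw [abKey n (fun c => -(x ^ (n + 1 - c) * ((1 - x) ^ (n + 2))⁻¹))]
  rw [hval]
  show HasDerivAt (fun s => ∑ σ : Equiv.Perm (Fin n),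
    -((l * Complex.exp s) ^ (n - descentCount n σ)
      * ((1 - l * Complex.exp s) ^ (n + 1))⁻¹)) _ t
  apply HasDerivAt.fun_sum
  intro σ _
  have hle : descentCount n σ ≤ n := le_trans (descentCount_le n σ) (Nat.sub_le n 1)
  rw [abAlg x h1x n (descentCount n σ) hle]
  have h_pow : HasDerivAt (fun s => (l * Complex.exp s) ^ (n - descentCount n σ))
      (((n - descentCount n σ : ℕ) : ℂ) * x ^ (n - descentCount n σ - 1) * x) t := by
    simpa [mul_assoc, Function.comp_def] using (hasDerivAt_pow (n - descentCount n σ) x).comp t hu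
  have h_den : HasDerivAt (fun s => (1 - l * Complex.exp s) ^ (n + 1))
      ((((n + 1 : ℕ) : ℂ) * (1 - x) ^ (n + 1 - 1)) * (0 - x)) t := by
    exact (hasDerivAt_pow (n + 1) (1 - x)).comp t ((hasDerivAt_const t (1:ℂ)).sub hu)
  have h_inv := h_den.inv (pow_ne_zero (n + 1) h1x)
  exact (h_pow.mul h_inv).neg

lemma abEv (l : ℂ) (hl : l ≠ 1) (k : ℕ) :
    deriv^[k] (fun t : ℂ => t / (l * Complex.exp t - 1))
      =ᶠ[nhds (0 : ℂ)] fun t => t * abG l k t + (k : ℂ) * abG l (k - 1) t := by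
  have hU : IsOpen {t : ℂ | l * Complex.exp t ≠ 1} := by
    have : Continuous fun t : ℂ => l * Complex.exp t := continuous_const.mul Complex.continuous_exp
    exact isOpen_compl_singleton.preimage this
  have h0 : (0 : ℂ) ∈ {t : ℂ | l * Complex.exp t ≠ 1} := by
    simp [Complex.exp_zero, hl]
  have hUmem : {t : ℂ | l * Complex.exp t ≠ 1} ∈ nhds (0 : ℂ) := hU.mem_nhds h0
  induction k with
  | zero =>
    apply Filter.EventuallyEq.of_eq
    funext t
    have : abG l 0 t = -(((1 - l * Complex.exp t) ^ 1)⁻¹) := by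
      rw [abG, Finset.univ_unique, Finset.sum_singleton]
      norm_num
    simp only [Function.iterate_zero, id, this, Nat.cast_zero, zero_mul, add_zero, pow_one]
    rw [div_eq_mul_inv,
      (by ring : l * Complex.exp t - 1 = -(1 - l * Complex.exp t)), inv_neg]
  | succ k ih =>
    rw [Function.iterate_succ_apply']
    refine (ih.deriv).trans ?_
    apply Filter.eventuallyEq_of_mem hUmem
    intro t htU
    have h1 : HasDerivAt (fun s : ℂ => s * abG l k s)
        (1 * abG l k t + t * abG l (k + 1) t) t :=
      (hasDerivAt_id t).mul (abG_hasDerivAt l k htU)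
    have h2 : HasDerivAt (fun s : ℂ => (k : ℂ) * abG l (k - 1) s)
        ((k : ℂ) * abG l (k - 1 + 1) t) t := (abG_hasDerivAt l (k - 1) htU).const_mul _
    have h3 : (k : ℂ) * abG l (k - 1 + 1) t = (k : ℂ) * abG l k t := by
      rcases k with _ | j
      · simp
      · rfl
    rw [h3] at h2
    have h4 := (h1.fun_add h2).deriv
    rw [h4]
    push_cast
    ring

theorem stmt17 (m : ℕ) (l : ℂ) (hl : l ≠ 1) :
    apostolBernoulli (m + 1) l
      = -(((m : ℂ) + 1) / (1 - l) ^ (m + 1)) *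
          ∑ j ∈ Finset.range (m + 1), (eulerianNumber m j : ℂ) * l ^ (m - j) := by
  have h1 : apostolBernoulli (m+1) l
      = deriv^[m+1] (fun t : ℂ => t / (l * Complex.exp t - 1)) 0 := by
    rw [apostolBernoulli, iteratedDeriv_eq_iterate]
  rw [h1, (abEv l hl (m+1)).eq_of_nhds]
  simp only [zero_mul, zero_add, Nat.add_sub_cancel]
  have hG : abG l m 0 = ∑ j ∈ Finset.range (m+1),
      (eulerianNumber m j : ℂ) * -(l ^ (m - j) * ((1 - l) ^ (m + 1))⁻¹) := by
    rw [abG]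
    simp only [Complex.exp_zero, mul_one]
    rw [← Finset.sum_fiberwise_of_maps_to (g := fun σ : Equiv.Perm (Fin m) => descentCount m σ)
      (t := Finset.range (m+1))
      (fun σ _ => Finset.mem_range.mpr (Nat.lt_succ_of_le (le_trans (descentCount_le m σ) (Nat.sub_le m 1))))
      (fun σ => -(l ^ (m - descentCount m σ) * ((1 - l) ^ (m + 1))⁻¹))]
    apply Finset.sum_congr rfl
    intro j hj
    rw [Finset.sum_congr rfl (fun σ hσ => by
      rw [(Finset.mem_filter.mp hσ).2]), Finset.sum_const, eulerianNumber, nsmul_eq_mul]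
  rw [hG, Finset.mul_sum, Finset.mul_sum]
  apply Finset.sum_congr rfl
  intro j _
  push_cast
  ring
end
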